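/- arXiv:2305.07364 — 3 statements merged into one kernel-verified Lean document; each statement's English description precedes it below -/
import Mathlib

section
/- Companion lemma: Let g be a gate of a monotone multilinear Boolean circuit that contains no Boolean-constant input gates, and let t be a term in T(g). Then there exists a term t' in T(g) without variable repetitions (no variable occurs twice or more in t') such that t' ≤ t, i.e., for every variable x, the number of occurrences of x in t' does not exceed the number of occurrences of x in t. -/
open BigOperators

namespace MC

/-- A gate label: an input gate labeled by a variable or a Boolean constant,
or an OR/AND gate with the indices of its two direct predecessors. -/
inductive GateLabel (V : Type) where
  | var (v : V)
  | const (b : Bool)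
  | or (a b : ℕ)
  | and (a b : ℕ)

def GateLabel.isOp {V : Type} : GateLabel V → Bool
  | .or _ _ => true
  | .and _ _ => true
  | _ => false

def GateLabel.isAnd {V : Type} : GateLabel V → Bool
  | .and _ _ => true
  | _ => false

def GateLabel.isOr {V : Type} : GateLabel V → Bool
  | .or _ _ => true
  | _ => false

/-- A monotone Boolean circuit: a finite DAG whose gates are numbered
`0, …, n-1` in topological order (direct predecessors of a gate have smaller
indices, which enforces acyclicity). Gates of indegree 0 are labeled by
variables or Boolean constants, the remaining gates are OR/AND gates of
indegree 2. -/
structure Circuit (V : Type) where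
  n : ℕ
  label : Fin n → GateLabel V
  wf : ∀ (i : Fin n) (a b : ℕ),
    (label i = .or a b ∨ label i = .and a b) → a < i.1 ∧ b < i.1

namespace Circuit

variable {V : Type}

/-- The set `T(g)` of terms associated with gate `g`: for an input gate the
singleton of its label, for an OR gate the union of the term sets of its two
direct predecessors, and for an AND gate the set of concatenations `t₁ t₂` of
terms of its two direct predecessors. A term is a word over variables and
Boolean constants. -/
inductive MemTerms (C : Circuit V) : Fin C.n → List (V ⊕ Bool) → Prop
  | var {i : Fin C.n} {v : V} : C.label i = .var v → MemTerms C i [Sum.inl v]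
  | const {i : Fin C.n} {b : Bool} : C.label i = .const b → MemTerms C i [Sum.inr b]
  | or_left {i : Fin C.n} {a b : ℕ} {t : List (V ⊕ Bool)}
      (h : C.label i = .or a b) (ha : a < C.n) :
      MemTerms C ⟨a, ha⟩ t → MemTerms C i t
  | or_right {i : Fin C.n} {a b : ℕ} {t : List (V ⊕ Bool)}
      (h : C.label i = .or a b) (hb : b < C.n) :
      MemTerms C ⟨b, hb⟩ t → MemTerms C i t
  | and {i : Fin C.n} {a b : ℕ} {t₁ t₂ : List (V ⊕ Bool)}
      (h : C.label i = .and a b) (ha : a < C.n) (hb : b < C.n) :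
      MemTerms C ⟨a, ha⟩ t₁ → MemTerms C ⟨b, hb⟩ t₂ → MemTerms C i (t₁ ++ t₂)

end Circuit

/-- Evaluation of a single letter (variable or constant) of a term. -/
def litEval {V : Type} (σ : V → Bool) : V ⊕ Bool → Bool
  | Sum.inl v => σ v
  | Sum.inr b => b

/-- A term evaluates to true iff the conjunction of its letters is true. -/
def termEval {V : Type} (σ : V → Bool) (t : List (V ⊕ Bool)) : Bool :=
  t.all (litEval σ)

/-- The (monotone Boolean) function computed at gate `g`: the disjunction,
over all terms `t ∈ T(g)`, of the conjunction represented by `t`. -/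
def Circuit.gateFun {V : Type} (C : Circuit V) (g : Fin C.n) (σ : V → Bool) : Prop :=
  ∃ t : List (V ⊕ Bool), C.MemTerms g t ∧ termEval σ t = true

/-- A Boolean function depends on the variable `v`. -/
def Depends {V : Type} [DecidableEq V] (f : (V → Bool) → Prop) (v : V) : Prop :=
  ∃ σ : V → Bool,
    ¬(f (Function.update σ v false) ↔ f (Function.update σ v true))

/-- A monotone Boolean circuit is multilinear if for every AND gate the
functions computed at its two direct predecessors share no variable. -/
def Circuit.Multilinear {V : Type} [DecidableEq V] (C : Circuit V) : Prop :=
  ∀ (i : Fin C.n) (a b : ℕ), C.label i = .and a b →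
    ∀ (ha : a < C.n) (hb : b < C.n) (v : V),
      ¬(Depends (C.gateFun ⟨a, ha⟩) v ∧ Depends (C.gateFun ⟨b, hb⟩) v)

/-- `S` (a conjunction of variables) is an implicant of `f`: whenever all the
variables of `S` are true, `f` is true. -/
def Implicant {V : Type} (f : (V → Bool) → Prop) (S : Finset V) : Prop :=
  ∀ σ : V → Bool, (∀ v ∈ S, σ v = true) → f σ

/-- A prime implicant: an implicant minimal with respect to included variables. -/
def PrimeImplicant {V : Type} (f : (V → Bool) → Prop) (S : Finset V) : Prop :=
  Implicant f S ∧ ∀ S' ⊂ S, ¬ Implicant f S'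

/-- The set of variables occurring in a term. -/
def termVars {V : Type} (t : List (V ⊕ Bool)) : Set V := {v : V | Sum.inl v ∈ t}

/-- A term `t` represents the monom with variable set `S` if the set of
variables occurring in `t` equals `S`. -/
def Represents {V : Type} (t : List (V ⊕ Bool)) (S : Finset V) : Prop :=
  termVars t = ↑S

/-- The circuit computes the form `F` (a family of monotone Boolean
functions), the function `F i` being computed at the output gate `out i`. -/
def Circuit.Computes {V ι : Type} (C : Circuit V) (out : ι → Fin C.n)
    (F : ι → (V → Bool) → Prop) : Prop :=
  ∀ (i : ι) (σ : V → Bool), C.gateFun (out i) σ ↔ F i σ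

/-- The circuit (with output gates `out`, computing the form `F`) is
`q`-multilinear: for each prime implicant `S` of each `F i` there is a term
`t ∈ T(out i)` representing `S` in which no variable occurs more than `q`
times. -/
def Circuit.QMultilinear {V ι : Type} [DecidableEq V] (C : Circuit V)
    (out : ι → Fin C.n) (F : ι → (V → Bool) → Prop) (q : ℕ) : Prop :=
  ∀ (i : ι) (S : Finset V), PrimeImplicant (F i) S →
    ∃ t : List (V ⊕ Bool), C.MemTerms (out i) t ∧ Represents t S ∧
      ∀ v : V, t.count (Sum.inl v) ≤ q

/-- The circuit is strictly `q`-multilinear: no term of any gate contains more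
than `q` occurrences of a single variable. -/
def Circuit.StrictlyQMultilinear {V : Type} [DecidableEq V] (C : Circuit V) (q : ℕ) : Prop :=
  ∀ (g : Fin C.n) (t : List (V ⊕ Bool)), C.MemTerms g t →
    ∀ v : V, t.count (Sum.inl v) ≤ q

/-- The size of a circuit: the number of its non-input gates. -/
def Circuit.size {V : Type} (C : Circuit V) : ℕ :=
  (Finset.univ.filter fun i : Fin C.n => (C.label i).isOp = true).card

/-- The number of AND gates of a circuit. -/
def Circuit.andGateCount {V : Type} (C : Circuit V) : ℕ :=
  (Finset.univ.filter fun i : Fin C.n => (C.label i).isAnd = true).card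

/-- The number of OR gates of a circuit. -/
def Circuit.orGateCount {V : Type} (C : Circuit V) : ℕ :=
  (Finset.univ.filter fun i : Fin C.n => (C.label i).isOr = true).card

/-- The circuit has no Boolean-constant input gates. -/
def Circuit.NoConstants {V : Type} (C : Circuit V) : Prop :=
  ∀ (i : Fin C.n) (b : Bool), C.label i ≠ .const b

/-- `AndDepth C g d`: there is a path from an input gate to the gate `g`
containing exactly `d` AND gates. -/
inductive Circuit.AndDepth {V : Type} (C : Circuit V) : Fin C.n → ℕ → Prop
  | input {i : Fin C.n} : (C.label i).isOp = false → AndDepth C i 0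
  | or_step {i : Fin C.n} {a b p d : ℕ}
      (h : C.label i = .or a b) (hp : p = a ∨ p = b) (hpn : p < C.n) :
      AndDepth C ⟨p, hpn⟩ d → AndDepth C i d
  | and_step {i : Fin C.n} {a b p d : ℕ}
      (h : C.label i = .and a b) (hp : p = a ∨ p = b) (hpn : p < C.n) :
      AndDepth C ⟨p, hpn⟩ d → AndDepth C i (d + 1)

/-- `AltDepth C g l d`: there is a path from an input gate to the gate `g`
whose non-input gates form exactly `d` blocks of consecutive OR gates and
consecutive AND gates, the last block consisting of OR gates (if
`l = some false`) or of AND gates (if `l = some true`); `l = none` when the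
path consists of a single input gate. -/
inductive Circuit.AltDepth {V : Type} (C : Circuit V) : Fin C.n → Option Bool → ℕ → Prop
  | input {i : Fin C.n} : (C.label i).isOp = false → AltDepth C i none 0
  | or_step {i : Fin C.n} {a b p : ℕ} {l : Option Bool} {d : ℕ}
      (h : C.label i = .or a b) (hp : p = a ∨ p = b) (hpn : p < C.n) :
      AltDepth C ⟨p, hpn⟩ l d →
      AltDepth C i (some false) (if l = some false then d else d + 1)
  | and_step {i : Fin C.n} {a b p : ℕ} {l : Option Bool} {d : ℕ}
      (h : C.label i = .and a b) (hp : p = a ∨ p = b) (hpn : p < C.n) :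
      AltDepth C ⟨p, hpn⟩ l d →
      AltDepth C i (some true) (if l = some true then d else d + 1)

/-- The alternation depth of the circuit (with output gates `out`) is at most `d`. -/
def Circuit.AltDepthLE {V ι : Type} (C : Circuit V) (out : ι → Fin C.n) (d : ℕ) : Prop :=
  ∀ (i : ι) (l : Option Bool) (c : ℕ), C.AltDepth (out i) l c → c ≤ d

/-- A `Π_d` circuit: alternation depth at most `d` and all output gates are AND gates. -/
def Circuit.IsPi {V ι : Type} (C : Circuit V) (out : ι → Fin C.n) (d : ℕ) : Prop :=
  (∀ i : ι, (C.label (out i)).isAnd = true) ∧ C.AltDepthLE out d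

/-- A `Σ_d` circuit: alternation depth at most `d` and all output gates are OR gates. -/
def Circuit.IsSigma {V ι : Type} (C : Circuit V) (out : ι → Fin C.n) (d : ℕ) : Prop :=
  (∀ i : ι, (C.label (out i)).isOr = true) ∧ C.AltDepthLE out d

/-- A monotone Boolean function. -/
def MonotoneFun {V : Type} (f : (V → Bool) → Prop) : Prop :=
  ∀ σ σ' : V → Bool, (∀ v : V, σ v = true → σ' v = true) → f σ → f σ'

/-- A semi-disjoint bilinear form on the variables `x_0,…,x_{n-1}` (the left
summands) and `y_0,…,y_{n-1}` (the right summands): a family of monotone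
Boolean functions such that every prime implicant consists of exactly one
`x`-variable and one `y`-variable, for each function every variable occurs in
at most one of its prime implicants, and the sets of prime implicants of
different functions of the family are pairwise disjoint. -/
def SemiDisjointBilinear {n : ℕ} {ι : Type}
    (F : ι → ((Fin n ⊕ Fin n) → Bool) → Prop) : Prop :=
  (∀ i : ι, MonotoneFun (F i)) ∧
  (∀ (i : ι) (S : Finset (Fin n ⊕ Fin n)), PrimeImplicant (F i) S →
    ∃ a b : Fin n, S = {Sum.inl a, Sum.inr b}) ∧
  (∀ (i : ι) (S S' : Finset (Fin n ⊕ Fin n)) (z : Fin n ⊕ Fin n),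
    PrimeImplicant (F i) S → PrimeImplicant (F i) S' → z ∈ S → z ∈ S' → S = S') ∧
  (∀ (i j : ι) (S : Finset (Fin n ⊕ Fin n)), i ≠ j →
    PrimeImplicant (F i) S → ¬ PrimeImplicant (F j) S)

/-- The total number of prime implicants of the form `F`. -/
noncomputable def totalPrimeImplicants {V ι : Type} (F : ι → (V → Bool) → Prop) : ℕ :=
  Nat.card {pr : ι × Finset V // PrimeImplicant (F pr.1) pr.2}

/-- A cell of the `k`-dimensional grid `[n]^k`. -/
abbrev Cell (k n : ℕ) := Fin k → Fin n

/-- The function `Isol_{k,n}`: for a `k`-dimensional `n × ⋯ × n` Boolean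
matrix `σ`, it is true iff every line (a set of `n` entries obtained by fixing
`k-1` indices and letting the remaining one, in direction `d`, range over `[n]`)
contains at least one `1`. -/
def IsolFun (k n : ℕ) (σ : Cell k n → Bool) : Prop :=
  ∀ (d : Fin k) (c : Cell k n), ∃ x : Cell k n,
    (∀ j : Fin k, j ≠ d → x j = c j) ∧ σ x = true

/-- Every line of the grid contains exactly one cell of `S`. -/
def ExactlyOnePerLine (k n : ℕ) (S : Finset (Cell k n)) : Prop :=
  ∀ (d : Fin k) (c : Cell k n),
    ∃! x : Cell k n, x ∈ S ∧ ∀ j : Fin k, j ≠ d → x j = c j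

/-- `|SPI(Isol_{k,n})|`: the number of shortest prime implicants of
`Isol_{k,n}`, i.e. the number of sets `S` of `n^{k-1}` cells of `[n]^k` such
that every line of the grid contains exactly one cell of `S`. -/
noncomputable def spiCount (k n : ℕ) : ℕ :=
  Set.ncard {S : Finset (Cell k n) |
    S.card = n ^ (k - 1) ∧ ExactlyOnePerLine k n S}

/-- The circuit obtained from `C` by replacing the gate `g` with the Boolean
constant `1`. -/
def Circuit.replaceByTrue {V : Type} (C : Circuit V) (g : Fin C.n) : Circuit V where
  n := C.n
  label := Function.update C.label g (GateLabel.const true)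
  wf := by
    intro i a b hab
    rcases eq_or_ne i g with rfl | hig
    · rw [Function.update_self] at hab
      rcases hab with h | h <;> cases h
    · rw [Function.update_of_ne hig] at hab
      exact C.wf i a b hab

end MC

namespace MC

section CompanionAux

variable {V : Type} [DecidableEq V]

private lemma sum_beq_def (x y : V ⊕ Bool) : (x == y) = (match x, y with
    | Sum.inl a, Sum.inl b => a == b
    | Sum.inr a, Sum.inr b => a == b
    | _, _ => false) := by
  cases x <;> cases y <;> rfl

instance : LawfulBEq (V ⊕ Bool) := by
  refine @LawfulBEq.mk _ _ ⟨?_⟩ ?_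
  rotate_left
  · intro a b h
    cases a <;> cases b <;> simp_all [sum_beq_def]
  · intro a
    cases a <;> simp [sum_beq_def]

/-- The finite set of variables occurring in a term. -/
def varFinset (t : List (V ⊕ Bool)) : Finset V :=
  (t.filterMap Sum.getLeft?).toFinset

lemma mem_varFinset {t : List (V ⊕ Bool)} {v : V} :
    v ∈ varFinset t ↔ Sum.inl v ∈ t := by
  simp only [varFinset, List.mem_toFinset, List.mem_filterMap]
  constructor
  · rintro ⟨x, hx, hxv⟩
    cases x with
    | inl w => simp only [Sum.getLeft?, Option.some.injEq] at hxv; cases hxv; exact hx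
    | inr b => simp [Sum.getLeft?] at hxv
  · intro h; exact ⟨_, h, rfl⟩

lemma varFinset_append (t₁ t₂ : List (V ⊕ Bool)) :
    varFinset (t₁ ++ t₂) = varFinset t₁ ∪ varFinset t₂ := by
  ext v; simp [mem_varFinset, List.mem_append, Finset.mem_union]

lemma noConst_mem {C : Circuit V} (hnc : C.NoConstants) {g : Fin C.n}
    {t : List (V ⊕ Bool)} (ht : C.MemTerms g t) :
    ∀ x ∈ t, ∃ v, x = Sum.inl v := by
  induction ht with
  | var h =>
    intro x hx
    simp only [List.mem_singleton] at hx
    exact ⟨_, hx⟩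
  | const h => exact absurd h (hnc _ _)
  | or_left h ha _ ih => exact ih
  | or_right h hb _ ih => exact ih
  | and h ha hb _ _ ih1 ih2 =>
    intro x hx
    rcases List.mem_append.1 hx with hx | hx
    exacts [ih1 x hx, ih2 x hx]

lemma termEval_of_forall {σ : V → Bool} {t : List (V ⊕ Bool)}
    (hc : ∀ x ∈ t, ∃ v, x = Sum.inl v)
    (h : ∀ v ∈ varFinset t, σ v = true) : termEval σ t = true := by
  rw [termEval, List.all_eq_true]
  intro x hx
  obtain ⟨v, rfl⟩ := hc x hx
  exact h v (mem_varFinset.2 hx)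

lemma forall_of_termEval {σ : V → Bool} {t : List (V ⊕ Bool)}
    (h : termEval σ t = true) : ∀ v ∈ varFinset t, σ v = true := by
  intro v hv
  rw [termEval, List.all_eq_true] at h
  exact h _ (mem_varFinset.1 hv)

/-- Among the terms of a gate whose variable set lies inside that of a given
term, there is one with a minimal variable set. -/
lemma exists_minimal_term {C : Circuit V} {g : Fin C.n} {t : List (V ⊕ Bool)}
    (ht : C.MemTerms g t) :
    ∃ s, C.MemTerms g s ∧ varFinset s ⊆ varFinset t ∧
      ∀ s', C.MemTerms g s' → varFinset s' ⊆ varFinset t →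
        ¬ varFinset s' ⊂ varFinset s := by
  set N : Set ℕ := {n | ∃ s, C.MemTerms g s ∧ varFinset s ⊆ varFinset t ∧
      (varFinset s).card = n} with hN
  have hne : N.Nonempty := ⟨(varFinset t).card, t, ht, le_refl _, rfl⟩
  obtain ⟨n, ⟨s, hs, hsub, hcard⟩, hmin⟩ := (wellFounded_lt (α := ℕ)).has_min N hne
  refine ⟨s, hs, hsub, ?_⟩
  intro s' hs' hsub' hss
  have hlt : (varFinset s').card < n := hcard ▸ Finset.card_lt_card hss
  exact hmin _ ⟨s', hs', hsub', rfl⟩ hlt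

/-- The function at a gate depends on every variable of a term whose variable
set cannot be shrunk. -/
lemma depends_of_minimal {C : Circuit V} (hnc : C.NoConstants) {g : Fin C.n}
    {s : List (V ⊕ Bool)} (hs : C.MemTerms g s) {v : V}
    (hv : v ∈ varFinset s)
    (hmin : ∀ s', C.MemTerms g s' → ¬ varFinset s' ⊆ (varFinset s).erase v) :
    Depends (C.gateFun g) v := by
  refine ⟨fun w => decide (w ∈ varFinset s), ?_⟩
  intro hiff
  have htrue : C.gateFun g (Function.update (fun w => decide (w ∈ varFinset s)) v true) := by
    refine ⟨s, hs, termEval_of_forall (noConst_mem hnc hs) ?_⟩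
    intro w hw
    rcases eq_or_ne w v with rfl | hwv
    · simp [Function.update_self]
    · simp [Function.update_of_ne hwv, hw]
  obtain ⟨s', hs', heval⟩ := hiff.2 htrue
  refine hmin s' hs' ?_
  intro w hw
  have hval := forall_of_termEval heval w hw
  rcases eq_or_ne w v with rfl | hwv
  · simp [Function.update_self] at hval
  · rw [Function.update_of_ne hwv] at hval
    simp only [decide_eq_true_eq] at hval
    exact Finset.mem_erase.2 ⟨hwv, hval⟩

lemma key_lemma {C : Circuit V} (hml : C.Multilinear) (hnc : C.NoConstants) :
    ∀ (k : ℕ) (g : Fin C.n), g.1 = k → ∀ t, C.MemTerms g t →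
      ∃ t', C.MemTerms g t' ∧ (∀ v : V, t'.count (Sum.inl v) ≤ 1) ∧
        varFinset t' ⊆ varFinset t := by
  intro k
  induction k using Nat.strong_induction_on with
  | _ k ih =>
  rintro g rfl t ht
  cases ht with
  | @var _ v h =>
    refine ⟨[Sum.inl v], Circuit.MemTerms.var h, ?_, le_refl _⟩
    intro w
    simp only [List.count_cons, List.count_nil]
    split <;> simp
  | const h => exact absurd h (hnc _ _)
  | or_left h ha ht' =>
    have hlt := (C.wf _ _ _ (Or.inl h)).1
    obtain ⟨t', ht', h1, h2⟩ := ih _ hlt ⟨_, ha⟩ rfl _ ht'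
    exact ⟨t', Circuit.MemTerms.or_left h ha ht', h1, h2⟩
  | or_right h hb ht' =>
    have hlt := (C.wf _ _ _ (Or.inl h)).2
    obtain ⟨t', ht', h1, h2⟩ := ih _ hlt ⟨_, hb⟩ rfl _ ht'
    exact ⟨t', Circuit.MemTerms.or_right h hb ht', h1, h2⟩
  | @and _ a b t₁ t₂ h ha hb ht₁ ht₂ =>
    have hlta := (C.wf _ _ _ (Or.inr h)).1
    have hltb := (C.wf _ _ _ (Or.inr h)).2
    obtain ⟨s₁, hs₁, hsub₁, hmin₁⟩ := exists_minimal_term ht₁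
    obtain ⟨s₂, hs₂, hsub₂, hmin₂⟩ := exists_minimal_term ht₂
    obtain ⟨t₁', ht₁', hc₁, hv₁⟩ := ih _ hlta ⟨a, ha⟩ rfl _ hs₁
    obtain ⟨t₂', ht₂', hc₂, hv₂⟩ := ih _ hltb ⟨b, hb⟩ rfl _ hs₂
    have hA : varFinset t₁' = varFinset s₁ := by
      rcases hv₁.ssubset_or_eq with hss | h'
      · exact absurd hss (hmin₁ _ ht₁' (hv₁.trans hsub₁))
      · exact h'
    have hB : varFinset t₂' = varFinset s₂ := by
      rcases hv₂.ssubset_or_eq with hss | h'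
      · exact absurd hss (hmin₂ _ ht₂' (hv₂.trans hsub₂))
      · exact h'
    have key₁ : ∀ v ∈ varFinset t₁', ∀ s', C.MemTerms ⟨a, ha⟩ s' →
        ¬ varFinset s' ⊆ (varFinset t₁').erase v := by
      intro v hv s' hsmem hsub'
      refine hmin₁ s' hsmem
        ((hsub'.trans (Finset.erase_subset _ _)).trans (hA ▸ hsub₁)) ?_
      rw [← hA]
      exact hsub'.trans_ssubset (Finset.erase_ssubset hv)
    have key₂ : ∀ v ∈ varFinset t₂', ∀ s', C.MemTerms ⟨b, hb⟩ s' →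
        ¬ varFinset s' ⊆ (varFinset t₂').erase v := by
      intro v hv s' hsmem hsub'
      refine hmin₂ s' hsmem
        ((hsub'.trans (Finset.erase_subset _ _)).trans (hB ▸ hsub₂)) ?_
      rw [← hB]
      exact hsub'.trans_ssubset (Finset.erase_ssubset hv)
    have hdisj : ∀ v : V, ¬ (v ∈ varFinset t₁' ∧ v ∈ varFinset t₂') := by
      rintro v ⟨hv1, hv2⟩
      exact hml _ a b h ha hb v
        ⟨depends_of_minimal hnc ht₁' hv1 (key₁ v hv1),
         depends_of_minimal hnc ht₂' hv2 (key₂ v hv2)⟩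
    refine ⟨t₁' ++ t₂', Circuit.MemTerms.and h ha hb ht₁' ht₂', ?_, ?_⟩
    · intro v
      rw [List.count_append]
      rcases Nat.eq_zero_or_pos (t₁'.count (Sum.inl v)) with h0 | hp
      · rw [h0, Nat.zero_add]
        exact hc₂ v
      · have hm : Sum.inl v ∈ t₁' := List.count_pos_iff.1 hp
        have h0 : t₂'.count (Sum.inl v) = 0 := by
          rw [List.count_eq_zero]
          intro hm2
          exact hdisj v ⟨mem_varFinset.2 hm, mem_varFinset.2 hm2⟩
        rw [h0, Nat.add_zero]
        exact hc₁ v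
    · rw [varFinset_append, varFinset_append]
      exact Finset.union_subset_union (hv₁.trans hsub₁) (hv₂.trans hsub₂)

end CompanionAux

/-- **Companion lemma.** Let `g` be a gate of a monotone multilinear Boolean
circuit containing no Boolean-constant input gates, and let `t ∈ T(g)`. Then
there is a term `t' ∈ T(g)` without variable repetitions such that `t' ≤ t`,
i.e., for every variable `v` the number of occurrences of `v` in `t'` does not
exceed that in `t`. -/
theorem companion_lemma {V : Type} [DecidableEq V] (C : Circuit V)
    (hml : C.Multilinear) (hnc : C.NoConstants)
    (g : Fin C.n) (t : List (V ⊕ Bool)) (ht : C.MemTerms g t) :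
    ∃ t' : List (V ⊕ Bool), C.MemTerms g t' ∧
      (∀ v : V, t'.count (Sum.inl v) ≤ 1) ∧
      (∀ v : V, t'.count (Sum.inl v) ≤ t.count (Sum.inl v)) := by
  obtain ⟨t', ht', h1, h2⟩ := key_lemma hml hnc g.1 g rfl t ht
  refine ⟨t', ht', h1, ?_⟩
  intro v
  rcases Nat.eq_zero_or_pos (t'.count (Sum.inl v)) with h0 | hp
  · rw [h0]
    exact Nat.zero_le _
  · have hm : Sum.inl v ∈ t' := List.count_pos_iff.1 hp
    have hmt : Sum.inl v ∈ t := mem_varFinset.1 (h2 (mem_varFinset.2 hm))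
    calc t'.count (Sum.inl v) ≤ 1 := h1 v
      _ ≤ t.count (Sum.inl v) := List.count_pos_iff.2 hmt

end MC
end

section
/- For all integers k ≥ 2 and n ≥ 1, the function Isol_{k,n} admits a Π₄ monotone strictly k-multilinear Boolean circuit with k·n^{k−1}·(n−2) + n^{k−1} OR gates and k·n^{k−1} − 1 AND gates, in which at least a 1/n fraction of the input variables occur at most once in any term produced by the circuit. -/
open BigOperators

namespace MC


variable {V : Type}

inductive MF (V : Type) where
  | var (v : V)
  | const (b : Bool)
  | or (f g : MF V)
  | and (f g : MF V)

namespace MF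

def sz : MF V → ℕ
  | var _ => 1
  | const _ => 1
  | or f g => f.sz + g.sz + 1
  | and f g => f.sz + g.sz + 1

theorem sz_pos (f : MF V) : 1 ≤ f.sz := by
  cases f <;> simp [sz]

def gatesAux (o : ℕ) : MF V → List (GateLabel V)
  | var v => [.var v]
  | const b => [.const b]
  | or f g => gatesAux o f ++ gatesAux (o + f.sz) g ++
      [.or (o + f.sz - 1) (o + f.sz + g.sz - 1)]
  | and f g => gatesAux o f ++ gatesAux (o + f.sz) g ++
      [.and (o + f.sz - 1) (o + f.sz + g.sz - 1)]

theorem lenGates (o : ℕ) (f : MF V) : (gatesAux o f).length = f.sz := by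
  induction f generalizing o <;> simp [gatesAux, sz, *] <;> omega

inductive FTerms : MF V → List (V ⊕ Bool) → Prop
  | var {v : V} : FTerms (.var v) [Sum.inl v]
  | const {b : Bool} : FTerms (.const b) [Sum.inr b]
  | orl {f g t} : FTerms f t → FTerms (.or f g) t
  | orr {f g t} : FTerms g t → FTerms (.or f g) t
  | and {f g t₁ t₂} : FTerms f t₁ → FTerms g t₂ → FTerms (.and f g) (t₁ ++ t₂)

def FEval (f : MF V) (σ : V → Bool) : Prop :=
  ∃ t, FTerms f t ∧ termEval σ t = true

theorem feval_var {v : V} {σ} : FEval (.var v) σ ↔ σ v = true := by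
  constructor
  · rintro ⟨t, ht, he⟩; cases ht; simpa [termEval, litEval] using he
  · intro h; exact ⟨_, .var, by simp [termEval, litEval, h]⟩

theorem feval_const {b : Bool} {σ : V → Bool} : FEval (V := V) (.const b) σ ↔ b = true := by
  constructor
  · rintro ⟨t, ht, he⟩; cases ht; simpa [termEval, litEval] using he
  · intro h; exact ⟨_, .const, by simp [termEval, litEval, h]⟩

theorem feval_or {f g : MF V} {σ} : FEval (.or f g) σ ↔ FEval f σ ∨ FEval g σ := by
  constructor
  · rintro ⟨t, ht, he⟩
    cases ht with
    | orl h => exact Or.inl ⟨_, h, he⟩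
    | orr h => exact Or.inr ⟨_, h, he⟩
  · rintro (⟨t, ht, he⟩ | ⟨t, ht, he⟩)
    · exact ⟨t, .orl ht, he⟩
    · exact ⟨t, .orr ht, he⟩

theorem feval_and {f g : MF V} {σ} : FEval (.and f g) σ ↔ FEval f σ ∧ FEval g σ := by
  constructor
  · rintro ⟨t, ht, he⟩
    cases ht with
    | and h1 h2 =>
      simp only [termEval, List.all_append, Bool.and_eq_true] at he
      exact ⟨⟨_, h1, he.1⟩, ⟨_, h2, he.2⟩⟩
  · rintro ⟨⟨t1, h1, e1⟩, ⟨t2, h2, e2⟩⟩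
    exact ⟨t1 ++ t2, .and h1 h2, by simp [termEval, List.all_append] at e1 e2 ⊢; exact ⟨e1, e2⟩⟩

instance sumLawfulBEq {V : Type} [DecidableEq V] : LawfulBEq (V ⊕ Bool) where
  eq_of_beq := by
    intro a b h
    cases a <;> cases b
    · rename_i x y; rw [show (Sum.inl x == (Sum.inl y : V ⊕ Bool)) = (x == y) from rfl] at h
      exact congrArg Sum.inl (eq_of_beq h)
    · rename_i x y; rw [show (Sum.inl x == (Sum.inr y : V ⊕ Bool)) = false from rfl] at h
      exact absurd h (by simp)
    · rename_i x y; rw [show (Sum.inr x == (Sum.inl y : V ⊕ Bool)) = false from rfl] at h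
      exact absurd h (by simp)
    · rename_i x y; rw [show (Sum.inr x == (Sum.inr y : V ⊕ Bool)) = (x == y) from rfl] at h
      exact congrArg Sum.inr (eq_of_beq h)
  rfl := by
    intro a
    cases a
    · rename_i x; rw [show (Sum.inl x == (Sum.inl x : V ⊕ Bool)) = (x == x) from rfl]
      exact beq_self_eq_true _
    · rename_i x; rw [show (Sum.inr x == (Sum.inr x : V ⊕ Bool)) = (x == x) from rfl]
      exact beq_self_eq_true _

/-- per-variable weight bound -/
def W [DecidableEq V] : MF V → V → ℕ
  | var w, v => if v = w then 1 else 0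
  | const _, _ => 0
  | or f g, v => max (W f v) (W g v)
  | and f g, v => W f v + W g v

theorem count_le_W [DecidableEq V] {f : MF V} {t : List (V ⊕ Bool)} (h : FTerms f t)
    (v : V) : t.count (Sum.inl v) ≤ W f v := by
  induction h with
  | var =>
    rename_i w
    by_cases hv : v = w
    · subst hv; simp [W, List.count_singleton]
    · simp [W, hv, List.count_cons, List.count_nil, beq_iff_eq, Ne.symm hv]
  | const => simp [W, List.count_cons, List.count_nil, beq_iff_eq]
  | orl h ih => exact le_trans ih (le_max_left _ _)
  | orr h ih => exact le_trans ih (le_max_right _ _)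
  | and h1 h2 ih1 ih2 => rw [List.count_append]; exact Nat.add_le_add ih1 ih2

/-- alternation depth bounds: (last OR, last AND) -/
def ad : MF V → ℕ × ℕ
  | var _ => (0, 0)
  | const _ => (0, 0)
  | or f g => (max (max (ad f).1 ((ad f).2 + 1)) (max (ad g).1 ((ad g).2 + 1)), 0)
  | and f g => (0, max (max (ad f).2 ((ad f).1 + 1)) (max (ad g).2 ((ad g).1 + 1)))

def cntOr : MF V → ℕ
  | var _ => 0
  | const _ => 0
  | or f g => cntOr f + cntOr g + 1
  | and f g => cntOr f + cntOr g

def cntAnd : MF V → ℕ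
  | var _ => 0
  | const _ => 0
  | or f g => cntAnd f + cntAnd g
  | and f g => cntAnd f + cntAnd g + 1

theorem countP_isOr (o : ℕ) (f : MF V) :
    (gatesAux o f).countP (fun l => l.isOr) = cntOr f := by
  induction f generalizing o with
  | var v => simp [gatesAux, cntOr, List.countP_cons, GateLabel.isOr]
  | const b => simp [gatesAux, cntOr, List.countP_cons, GateLabel.isOr]
  | or f g ihf ihg =>
    simp only [gatesAux, cntOr, List.countP_append, List.countP_cons, ihf, ihg]
    simp [GateLabel.isOr]
  | and f g ihf ihg =>
    simp only [gatesAux, cntOr, List.countP_append, List.countP_cons, ihf, ihg]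
    simp [GateLabel.isOr]

theorem countP_isAnd (o : ℕ) (f : MF V) :
    (gatesAux o f).countP (fun l => l.isAnd) = cntAnd f := by
  induction f generalizing o with
  | var v => simp [gatesAux, cntAnd, List.countP_cons, GateLabel.isAnd]
  | const b => simp [gatesAux, cntAnd, List.countP_cons, GateLabel.isAnd]
  | or f g ihf ihg =>
    simp only [gatesAux, cntAnd, List.countP_append, List.countP_cons, ihf, ihg]
    simp [GateLabel.isAnd]
  | and f g ihf ihg =>
    simp only [gatesAux, cntAnd, List.countP_append, List.countP_cons, ihf, ihg]
    simp [GateLabel.isAnd]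

end MF
end MC

namespace MC
variable {V : Type}
namespace MF

theorem gates_wf (f : MF V) (o j : ℕ) (hj : j < f.sz) (a b : ℕ)
    (h : (gatesAux o f)[j]'(by rw [lenGates]; exact hj) = .or a b ∨
         (gatesAux o f)[j]'(by rw [lenGates]; exact hj) = .and a b) :
    a < o + j ∧ b < o + j := by
  induction f generalizing o j with
  | var v =>
    simp [sz] at hj; subst hj
    simp [gatesAux] at h
  | const c =>
    simp [sz] at hj; subst hj
    simp [gatesAux] at h
  | or f g ihf ihg =>
    have hlf := lenGates o f
    have hlg := lenGates (o + f.sz) g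
    by_cases h1 : j < f.sz
    · have e : (gatesAux o (.or f g))[j]'(by rw [lenGates]; exact hj)
          = (gatesAux o f)[j]'(by rw [hlf]; exact h1) := by
        simp only [gatesAux]
        rw [List.getElem_append_left (by simp [hlf, hlg]; omega),
          List.getElem_append_left (by rw [hlf]; exact h1)]
      rw [e] at h
      exact ihf o j h1 h
    · by_cases h2 : j < f.sz + g.sz
      · have e : (gatesAux o (.or f g))[j]'(by rw [lenGates]; exact hj)
            = (gatesAux (o + f.sz) g)[j - f.sz]'(by rw [hlg]; omega) := by
          simp only [gatesAux]
          rw [List.getElem_append_left (by simp [hlf, hlg]; omega),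
            List.getElem_append_right (by rw [hlf]; omega)]
          simp [hlf]
        rw [e] at h
        have := ihg (o + f.sz) (j - f.sz) (by omega) h
        omega
      · have hj3 : j = f.sz + g.sz := by simp [sz] at hj; omega
        subst hj3
        have e : (gatesAux o (.or f g))[f.sz + g.sz]'(by rw [lenGates]; exact hj)
            = .or (o + f.sz - 1) (o + f.sz + g.sz - 1) := by
          simp only [gatesAux]
          rw [List.getElem_append_right (by simp [hlf, hlg])]
          simp [hlf, hlg]
        rw [e] at h
        have hf := sz_pos f
        have hg := sz_pos g
        rcases h with h | h <;> cases h <;> constructor <;> omega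
  | and f g ihf ihg =>
    have hlf := lenGates o f
    have hlg := lenGates (o + f.sz) g
    by_cases h1 : j < f.sz
    · have e : (gatesAux o (.and f g))[j]'(by rw [lenGates]; exact hj)
          = (gatesAux o f)[j]'(by rw [hlf]; exact h1) := by
        simp only [gatesAux]
        rw [List.getElem_append_left (by simp [hlf, hlg]; omega),
          List.getElem_append_left (by rw [hlf]; exact h1)]
      rw [e] at h
      exact ihf o j h1 h
    · by_cases h2 : j < f.sz + g.sz
      · have e : (gatesAux o (.and f g))[j]'(by rw [lenGates]; exact hj)
            = (gatesAux (o + f.sz) g)[j - f.sz]'(by rw [hlg]; omega) := by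
          simp only [gatesAux]
          rw [List.getElem_append_left (by simp [hlf, hlg]; omega),
            List.getElem_append_right (by rw [hlf]; omega)]
          simp [hlf]
        rw [e] at h
        have := ihg (o + f.sz) (j - f.sz) (by omega) h
        omega
      · have hj3 : j = f.sz + g.sz := by simp [sz] at hj; omega
        subst hj3
        have e : (gatesAux o (.and f g))[f.sz + g.sz]'(by rw [lenGates]; exact hj)
            = .and (o + f.sz - 1) (o + f.sz + g.sz - 1) := by
          simp only [gatesAux]
          rw [List.getElem_append_right (by simp [hlf, hlg])]
          simp [hlf, hlg]
        rw [e] at h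
        have hf := sz_pos f
        have hg := sz_pos g
        rcases h with h | h <;> cases h <;> constructor <;> omega

def compile (f : MF V) : Circuit V where
  n := (gatesAux 0 f).length
  label i := (gatesAux 0 f)[i.1]'i.2
  wf := by
    intro i a b h
    have hj : i.1 < f.sz := by rw [← lenGates 0 f]; exact i.2
    have := gates_wf f 0 i.1 hj a b h
    omega

def Matches (C : Circuit V) (o : ℕ) (f : MF V) : Prop :=
  ∀ j (hj : j < f.sz), ∃ hoj : o + j < C.n,
    C.label ⟨o + j, hoj⟩ = (gatesAux o f)[j]'(by rw [lenGates]; exact hj)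

theorem matches_compile (f : MF V) : Matches (compile f) 0 f := by
  intro j hj
  refine ⟨by simp only [compile]; rw [lenGates]; omega, ?_⟩
  simp only [compile]
  congr 1
  omega

theorem matches_sub {C : Circuit V} {o : ℕ} {h₀ f g : MF V} {top : GateLabel V}
    (hsz : h₀.sz = f.sz + g.sz + 1)
    (hg : gatesAux o h₀ = (gatesAux o f ++ gatesAux (o + f.sz) g) ++ [top])
    (hm : Matches C o h₀) :
    Matches C o f ∧ Matches C (o + f.sz) g ∧
      ∃ h : o + f.sz + g.sz < C.n, C.label ⟨o + f.sz + g.sz, h⟩ = top := by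
  have hlf := lenGates o f
  have hlg := lenGates (o + f.sz) g
  refine ⟨?_, ?_, ?_⟩
  · intro j hj
    obtain ⟨hb, hl⟩ := hm j (by omega)
    refine ⟨hb, ?_⟩
    rw [hl]
    have : (gatesAux o h₀)[j]'(by rw [lenGates]; omega)
        = ((gatesAux o f ++ gatesAux (o + f.sz) g) ++ [top])[j]'(by
            simp [hlf, hlg]; try omega) := by
      congr 1
    rw [this, List.getElem_append_left (by simp [hlf, hlg]; omega),
      List.getElem_append_left (by rw [hlf]; exact hj)]
  · intro j hj
    obtain ⟨hb, hl⟩ := hm (f.sz + j) (by omega)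
    have he : o + f.sz + j = o + (f.sz + j) := by omega
    refine ⟨by omega, ?_⟩
    rw [show (⟨o + f.sz + j, by omega⟩ : Fin C.n) = ⟨o + (f.sz + j), hb⟩ from
      Fin.ext he, hl]
    have : (gatesAux o h₀)[f.sz + j]'(by rw [lenGates]; omega)
        = ((gatesAux o f ++ gatesAux (o + f.sz) g) ++ [top])[f.sz + j]'(by
            simp [hlf, hlg]; try omega) := by
      congr 1
    rw [this, List.getElem_append_left (by simp [hlf, hlg]; omega),
      List.getElem_append_right (by rw [hlf]; omega)]
    congr 1
    omega
  · obtain ⟨hb, hl⟩ := hm (f.sz + g.sz) (by omega)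
    have he : o + f.sz + g.sz = o + (f.sz + g.sz) := by omega
    refine ⟨by omega, ?_⟩
    rw [show (⟨o + f.sz + g.sz, by omega⟩ : Fin C.n) = ⟨o + (f.sz + g.sz), hb⟩ from
      Fin.ext he, hl]
    have : (gatesAux o h₀)[f.sz + g.sz]'(by rw [lenGates]; omega)
        = ((gatesAux o f ++ gatesAux (o + f.sz) g) ++ [top])[f.sz + g.sz]'(by
            simp [hlf, hlg]; try omega) := by
      congr 1
    rw [this, List.getElem_append_right (by simp [hlf, hlg])]
    simp [hlf, hlg]

theorem matches_or {C : Circuit V} {o : ℕ} {f g : MF V} (hm : Matches C o (.or f g)) :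
    Matches C o f ∧ Matches C (o + f.sz) g ∧
      ∃ h : o + f.sz + g.sz < C.n,
        C.label ⟨o + f.sz + g.sz, h⟩ = .or (o + f.sz - 1) (o + f.sz + g.sz - 1) :=
  matches_sub (h₀ := .or f g) (by simp [sz]) rfl hm

theorem matches_and {C : Circuit V} {o : ℕ} {f g : MF V} (hm : Matches C o (.and f g)) :
    Matches C o f ∧ Matches C (o + f.sz) g ∧
      ∃ h : o + f.sz + g.sz < C.n,
        C.label ⟨o + f.sz + g.sz, h⟩ = .and (o + f.sz - 1) (o + f.sz + g.sz - 1) :=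
  matches_sub (h₀ := .and f g) (by simp [sz]) rfl hm

theorem matches_leaf {C : Circuit V} {o : ℕ} {f : MF V}
    (hf : f.sz = 1) (hm : Matches C o f) :
    ∃ h : o < C.n, C.label ⟨o, h⟩ = (gatesAux o f)[0]'(by rw [lenGates]; omega) := by
  obtain ⟨hb, hl⟩ := hm 0 (by omega)
  exact ⟨by omega, by rw [show (⟨o, by omega⟩ : Fin C.n) = ⟨o + 0, hb⟩ from Fin.ext (by simp)]; exact hl⟩

theorem memTerms_iff {C : Circuit V} (f : MF V) (o : ℕ) (hm : Matches C o f)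
    (h : o + f.sz - 1 < C.n) (t : List (V ⊕ Bool)) :
    C.MemTerms ⟨o + f.sz - 1, h⟩ t ↔ FTerms f t := by
  induction f generalizing o t with
  | var v =>
    obtain ⟨hb, hl⟩ := matches_leaf (by simp [sz]) hm
    simp only [gatesAux] at hl
    have hi : (⟨o + sz (.var v) - 1, h⟩ : Fin C.n) = ⟨o, hb⟩ := Fin.ext (by simp [sz])
    rw [hi]
    constructor
    · intro ht
      cases ht with
      | var hv => rw [hl] at hv; cases hv; exact FTerms.var
      | const hv => rw [hl] at hv; cases hv
      | or_left hv _ _ => rw [hl] at hv; cases hv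
      | or_right hv _ _ => rw [hl] at hv; cases hv
      | and hv _ _ _ _ => rw [hl] at hv; cases hv
    · intro ht
      cases ht
      exact Circuit.MemTerms.var hl
  | const b =>
    obtain ⟨hb, hl⟩ := matches_leaf (by simp [sz]) hm
    simp only [gatesAux] at hl
    have hi : (⟨o + sz (.const b) - 1, h⟩ : Fin C.n) = ⟨o, hb⟩ := Fin.ext (by simp [sz])
    rw [hi]
    constructor
    · intro ht
      cases ht with
      | var hv => rw [hl] at hv; cases hv
      | const hv => rw [hl] at hv; cases hv; exact FTerms.const
      | or_left hv _ _ => rw [hl] at hv; cases hv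
      | or_right hv _ _ => rw [hl] at hv; cases hv
      | and hv _ _ _ _ => rw [hl] at hv; cases hv
    · intro ht
      cases ht
      exact Circuit.MemTerms.const hl
  | or f g ihf ihg =>
    obtain ⟨hmf, hmg, hb, hl⟩ := matches_or hm
    have hpf := sz_pos f
    have hpg := sz_pos g
    have hi : (⟨o + sz (.or f g) - 1, h⟩ : Fin C.n) = ⟨o + f.sz + g.sz, hb⟩ :=
      Fin.ext (by simp [sz]; omega)
    rw [hi]
    have haf : o + f.sz - 1 < C.n := by omega
    have hag : o + f.sz + g.sz - 1 < C.n := by omega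
    constructor
    · intro ht
      cases ht with
      | var hv => rw [hl] at hv; cases hv
      | const hv => rw [hl] at hv; cases hv
      | or_left hv ha mem =>
        rw [hl] at hv
        injection hv with h1 h2
        subst h1
        exact FTerms.orl ((ihf o hmf haf t).mp mem)
      | or_right hv ha mem =>
        rw [hl] at hv
        injection hv with h1 h2
        subst h2
        refine FTerms.orr (((ihg (o + f.sz) hmg (by omega) t)).mp ?_)
        convert mem using 2
        try omega
      | and hv _ _ _ _ => rw [hl] at hv; cases hv
    · intro ht
      cases ht with
      | orl hf' =>
        exact Circuit.MemTerms.or_left hl haf ((ihf o hmf haf t).mpr hf')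
      | orr hg' =>
        refine Circuit.MemTerms.or_right hl hag ?_
        have := (ihg (o + f.sz) hmg (by omega) t).mpr hg'
        convert this using 2
        try omega
  | and f g ihf ihg =>
    obtain ⟨hmf, hmg, hb, hl⟩ := matches_and hm
    have hpf := sz_pos f
    have hpg := sz_pos g
    have hi : (⟨o + sz (.and f g) - 1, h⟩ : Fin C.n) = ⟨o + f.sz + g.sz, hb⟩ :=
      Fin.ext (by simp [sz]; omega)
    rw [hi]
    have haf : o + f.sz - 1 < C.n := by omega
    have hag : o + f.sz + g.sz - 1 < C.n := by omega
    constructor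
    · intro ht
      cases ht with
      | var hv => rw [hl] at hv; cases hv
      | const hv => rw [hl] at hv; cases hv
      | or_left hv _ _ => rw [hl] at hv; cases hv
      | or_right hv _ _ => rw [hl] at hv; cases hv
      | and hv ha hb' mem1 mem2 =>
        rw [hl] at hv
        injection hv with h1 h2
        subst h1; subst h2
        refine FTerms.and ((ihf o hmf haf _).mp mem1)
          (((ihg (o + f.sz) hmg (by omega) _)).mp ?_)
        convert mem2 using 2
        try omega
    · intro ht
      cases ht with
      | and hf' hg' =>
        refine Circuit.MemTerms.and hl haf hag ((ihf o hmf haf _).mpr hf') ?_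
        have := (ihg (o + f.sz) hmg (by omega) _).mpr hg'
        convert this using 2
        try omega


theorem allGates [DecidableEq V] {C : Circuit V} (f : MF V) (o : ℕ) (hm : Matches C o f) :
    ∀ j, j < f.sz → ∃ (o' : ℕ) (f' : MF V), Matches C o' f' ∧ o' + f'.sz - 1 = o + j ∧
      ∀ v, W f' v ≤ W f v := by
  induction f generalizing o with
  | var v =>
    intro j hj
    have : j = 0 := by simp [sz] at hj; omega
    subst this
    exact ⟨o, .var v, hm, by simp [sz], fun _ => le_refl _⟩
  | const b =>
    intro j hj
    have : j = 0 := by simp [sz] at hj; omega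
    subst this
    exact ⟨o, .const b, hm, by simp [sz], fun _ => le_refl _⟩
  | or f g ihf ihg =>
    intro j hj
    obtain ⟨hmf, hmg, -⟩ := matches_or hm
    by_cases h1 : j < f.sz
    · obtain ⟨o', f', h1', h2', h3'⟩ := ihf o hmf j h1
      exact ⟨o', f', h1', h2', fun v => le_trans (h3' v) (le_max_left _ _)⟩
    · by_cases h2 : j < f.sz + g.sz
      · obtain ⟨o', f', h1', h2', h3'⟩ := ihg (o + f.sz) hmg (j - f.sz) (by omega)
        exact ⟨o', f', h1', by omega, fun v => le_trans (h3' v) (le_max_right _ _)⟩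
      · have : j = f.sz + g.sz := by simp [sz] at hj; omega
        subst this
        exact ⟨o, .or f g, hm, by simp [sz]; try omega, fun _ => le_refl _⟩
  | and f g ihf ihg =>
    intro j hj
    obtain ⟨hmf, hmg, -⟩ := matches_and hm
    by_cases h1 : j < f.sz
    · obtain ⟨o', f', h1', h2', h3'⟩ := ihf o hmf j h1
      exact ⟨o', f', h1', h2', fun v => le_trans (h3' v) (Nat.le_add_right _ _)⟩
    · by_cases h2 : j < f.sz + g.sz
      · obtain ⟨o', f', h1', h2', h3'⟩ := ihg (o + f.sz) hmg (j - f.sz) (by omega)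
        exact ⟨o', f', h1', by omega, fun v => le_trans (h3' v) (Nat.le_add_left _ _)⟩
      · have : j = f.sz + g.sz := by simp [sz] at hj; omega
        subst this
        exact ⟨o, .and f g, hm, by simp [sz]; try omega, fun _ => le_refl _⟩

theorem altDepth_le {C : Circuit V} (f : MF V) (o : ℕ) (hm : Matches C o f)
    (h : o + f.sz - 1 < C.n) :
    ∀ l c, C.AltDepth ⟨o + f.sz - 1, h⟩ l c →
      (l = some false → c ≤ (ad f).1) ∧ (l = some true → c ≤ (ad f).2) ∧
        (l = none → c = 0) := by
  induction f generalizing o with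
  | var v =>
    obtain ⟨hb, hl⟩ := matches_leaf (by simp [sz]) hm
    simp only [gatesAux] at hl
    have hi : (⟨o + sz (.var v) - 1, h⟩ : Fin C.n) = ⟨o, hb⟩ := Fin.ext (by simp [sz])
    rw [hi]
    intro l c hd
    cases hd with
    | input h0 => exact ⟨by simp, by simp, fun _ => rfl⟩
    | or_step hv _ _ _ => rw [hl] at hv; cases hv
    | and_step hv _ _ _ => rw [hl] at hv; cases hv
  | const b =>
    obtain ⟨hb, hl⟩ := matches_leaf (by simp [sz]) hm
    simp only [gatesAux] at hl
    have hi : (⟨o + sz (.const b) - 1, h⟩ : Fin C.n) = ⟨o, hb⟩ := Fin.ext (by simp [sz])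
    rw [hi]
    intro l c hd
    cases hd with
    | input h0 => exact ⟨by simp, by simp, fun _ => rfl⟩
    | or_step hv _ _ _ => rw [hl] at hv; cases hv
    | and_step hv _ _ _ => rw [hl] at hv; cases hv
  | or f g ihf ihg =>
    obtain ⟨hmf, hmg, hb, hl⟩ := matches_or hm
    have hpf := sz_pos f
    have hpg := sz_pos g
    have hi : (⟨o + sz (.or f g) - 1, h⟩ : Fin C.n) = ⟨o + f.sz + g.sz, hb⟩ :=
      Fin.ext (by simp [sz]; omega)
    rw [hi]
    have haf : o + f.sz - 1 < C.n := by omega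
    have hag : o + f.sz + g.sz - 1 < C.n := by omega
    intro l c hd
    cases hd with
    | input h0 => rw [hl] at h0; simp [GateLabel.isOp] at h0
    | or_step hv hp hpn sub =>
      rw [hl] at hv
      injection hv with h1 h2
      subst h1; subst h2
      rename_i l' d
      refine ⟨?_, by simp, by simp⟩
      intro _
      rcases hp with hp | hp <;> subst hp
      · have hsub : C.AltDepth ⟨o + f.sz - 1, haf⟩ l' d := by
          convert sub using 2
        have := ihf o hmf haf l' d hsub
        rcases l' with - | lb
        · simp only [ad]
          have := this.2.2 rfl
          simp; omega
        · rcases lb with - | -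
          · have := this.1 rfl
            simp only [ad]; simp; omega
          · have := this.2.1 rfl
            simp only [ad]; simp; omega
      · have hsub : C.AltDepth ⟨o + f.sz + g.sz - 1, hag⟩ l' d := by
          convert sub using 2
        have heq : o + f.sz + g.sz - 1 = (o + f.sz) + g.sz - 1 := by omega
        rw [show (⟨o + f.sz + g.sz - 1, hag⟩ : Fin C.n) = ⟨(o + f.sz) + g.sz - 1, by omega⟩
          from Fin.ext heq] at hsub
        have := ihg (o + f.sz) hmg (by omega) l' d hsub
        rcases l' with - | lb
        · have := this.2.2 rfl
          simp only [ad]; simp; omega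
        · rcases lb with - | -
          · have := this.1 rfl
            simp only [ad]; simp; omega
          · have := this.2.1 rfl
            simp only [ad]; simp; omega
    | and_step hv _ _ _ => rw [hl] at hv; cases hv
  | and f g ihf ihg =>
    obtain ⟨hmf, hmg, hb, hl⟩ := matches_and hm
    have hpf := sz_pos f
    have hpg := sz_pos g
    have hi : (⟨o + sz (.and f g) - 1, h⟩ : Fin C.n) = ⟨o + f.sz + g.sz, hb⟩ :=
      Fin.ext (by simp [sz]; omega)
    rw [hi]
    have haf : o + f.sz - 1 < C.n := by omega
    have hag : o + f.sz + g.sz - 1 < C.n := by omega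
    intro l c hd
    cases hd with
    | input h0 => rw [hl] at h0; simp [GateLabel.isOp] at h0
    | and_step hv hp hpn sub =>
      rw [hl] at hv
      injection hv with h1 h2
      subst h1; subst h2
      rename_i l' d
      refine ⟨by simp, ?_, by simp⟩
      intro _
      rcases hp with hp | hp <;> subst hp
      · have hsub : C.AltDepth ⟨o + f.sz - 1, haf⟩ l' d := by
          convert sub using 2
        have := ihf o hmf haf l' d hsub
        rcases l' with - | lb
        · have := this.2.2 rfl
          simp only [ad]; simp; omega
        · rcases lb with - | -
          · have := this.1 rfl
            simp only [ad]; simp; omega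
          · have := this.2.1 rfl
            simp only [ad]; simp; omega
      · have hsub : C.AltDepth ⟨o + f.sz + g.sz - 1, hag⟩ l' d := by
          convert sub using 2
        have heq : o + f.sz + g.sz - 1 = (o + f.sz) + g.sz - 1 := by omega
        rw [show (⟨o + f.sz + g.sz - 1, hag⟩ : Fin C.n) = ⟨(o + f.sz) + g.sz - 1, by omega⟩
          from Fin.ext heq] at hsub
        have := ihg (o + f.sz) hmg (by omega) l' d hsub
        rcases l' with - | lb
        · have := this.2.2 rfl
          simp only [ad]; simp; omega
        · rcases lb with - | -
          · have := this.1 rfl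
            simp only [ad]; simp; omega
          · have := this.2.1 rfl
            simp only [ad]; simp; omega
    | or_step hv _ _ _ => rw [hl] at hv; cases hv

theorem fin_filter_card {α : Type} (p : α → Bool) (L : List α) :
    (Finset.univ.filter fun i : Fin L.length => p (L[i.1]'i.2) = true).card
      = L.countP p := by
  induction L with
  | nil => simp
  | cons x xs ih =>
    rw [Finset.card_filter]
    simp only [List.length_cons]
    rw [Fin.sum_univ_succ, List.countP_cons]
    simp only [Fin.val_succ, List.getElem_cons_succ, List.getElem_cons_zero, Fin.val_zero]
    rw [← Finset.card_filter, ih]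
    by_cases hp : p x <;> simp [hp] <;> omega

theorem orGateCount_compile (f : MF V) : (compile f).orGateCount = cntOr f := by
  have := fin_filter_card (fun l => GateLabel.isOr l) (gatesAux 0 f)
  rw [Circuit.orGateCount]
  rw [show (Finset.univ.filter fun i : Fin (compile f).n => ((compile f).label i).isOr = true)
    = Finset.univ.filter fun i : Fin (gatesAux 0 f).length =>
        (fun l => GateLabel.isOr l) ((gatesAux 0 f)[i.1]'i.2) = true from rfl]
  exact this.trans (by rw [countP_isOr])

theorem andGateCount_compile (f : MF V) : (compile f).andGateCount = cntAnd f := by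
  have := fin_filter_card (fun l => GateLabel.isAnd l) (gatesAux 0 f)
  rw [Circuit.andGateCount]
  rw [show (Finset.univ.filter fun i : Fin (compile f).n => ((compile f).label i).isAnd = true)
    = Finset.univ.filter fun i : Fin (gatesAux 0 f).length =>
        (fun l => GateLabel.isAnd l) ((gatesAux 0 f)[i.1]'i.2) = true from rfl]
  exact this.trans (by rw [countP_isAnd])

def outIdx (f : MF V) : Fin (compile f).n :=
  ⟨f.sz - 1, by
    have := sz_pos f
    simp only [compile]; rw [lenGates]; omega⟩

theorem outIdx_eq (f : MF V) : outIdx f = (⟨0 + f.sz - 1, by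
    have := sz_pos f
    simp only [compile]; rw [lenGates]; omega⟩ : Fin (compile f).n) :=
  Fin.ext (by simp [outIdx])

theorem memTerms_out (f : MF V) (t : List (V ⊕ Bool)) :
    (compile f).MemTerms (outIdx f) t ↔ FTerms f t := by
  rw [outIdx_eq]
  exact memTerms_iff f 0 (matches_compile f) _ t

theorem gateFun_out (f : MF V) (σ : V → Bool) :
    (compile f).gateFun (outIdx f) σ ↔ FEval f σ := by
  unfold Circuit.gateFun FEval
  constructor
  · rintro ⟨t, ht, he⟩; exact ⟨t, (memTerms_out f t).mp ht, he⟩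
  · rintro ⟨t, ht, he⟩; exact ⟨t, (memTerms_out f t).mpr ht, he⟩

theorem strict_compile [DecidableEq V] (f : MF V) (q : ℕ) (hq : ∀ v, W f v ≤ q) :
    (compile f).StrictlyQMultilinear q := by
  intro g t hmem v
  obtain ⟨o', f', hm', he', hw'⟩ := allGates f 0 (matches_compile f) g.1
    (by have := g.2; simp only [compile] at this; exact lt_of_lt_of_eq this (lenGates 0 f))
  have hb' : o' + f'.sz - 1 < (compile f).n := by
    have := g.2
    omega
  have hg : g = (⟨o' + f'.sz - 1, hb'⟩ : Fin (compile f).n) := Fin.ext (by simp; omega)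
  rw [hg] at hmem
  have := (memTerms_iff f' o' hm' hb' t).mp hmem
  exact le_trans (count_le_W this v) (le_trans (hw' v) (hq v))

theorem altDepthLE_out (f : MF V) (d : ℕ) (h1 : (ad f).1 ≤ d) (h2 : (ad f).2 ≤ d) :
    ∀ l c, (compile f).AltDepth (outIdx f) l c → c ≤ d := by
  intro l c hd
  rw [outIdx_eq] at hd
  have := altDepth_le f 0 (matches_compile f) _ l c hd
  rcases l with - | lb
  · rw [this.2.2 rfl]; omega
  · rcases lb with - | -
    · exact le_trans (this.1 rfl) h1
    · exact le_trans (this.2.1 rfl) h2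

theorem label_out_and (f g : MF V) :
    ((compile (.and f g)).label (outIdx (.and f g))).isAnd = true := by
  obtain ⟨hmf, hmg, hb, hl⟩ := matches_and (matches_compile (.and f g))
  have : outIdx (.and f g) = (⟨0 + f.sz + g.sz, hb⟩ : Fin (compile (.and f g)).n) :=
    Fin.ext (by simp [outIdx, sz]; try omega)
  rw [this, hl]
  rfl


def orChain : List V → MF V
  | [] => .const false
  | [w] => .var w
  | w :: x :: ws => .or (.var w) (orChain (x :: ws))

def andChain : List (MF V) → MF V
  | [] => .const true
  | [f] => f
  | f :: g :: fs => .and f (andChain (g :: fs))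

theorem feval_orChain (l : List V) (σ : V → Bool) :
    FEval (orChain l) σ ↔ ∃ w ∈ l, σ w = true := by
  induction l with
  | nil => simp [orChain, feval_const]
  | cons w ws ih =>
    cases ws with
    | nil => simp [orChain, feval_var]
    | cons x xs =>
      rw [show orChain (w :: x :: xs) = .or (.var w) (orChain (x :: xs)) from rfl,
        feval_or, feval_var, ih]
      simp

theorem feval_andChain (l : List (MF V)) (σ : V → Bool) :
    FEval (andChain l) σ ↔ ∀ f ∈ l, FEval f σ := by
  induction l with
  | nil => simp [andChain, feval_const]
  | cons f fs ih =>
    cases fs with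
    | nil => simp [andChain]
    | cons g gs =>
      rw [show andChain (f :: g :: gs) = .and f (andChain (g :: gs)) from rfl,
        feval_and, ih]
      simp

theorem W_orChain_le [DecidableEq V] (l : List V) (v : V) :
    W (orChain l) v ≤ if v ∈ l then 1 else 0 := by
  induction l with
  | nil => simp [orChain, W]
  | cons w ws ih =>
    have hstep : ∀ (rest : MF V), W rest v ≤ (if v ∈ ws then 1 else 0) →
        max (if v = w then 1 else 0) (W rest v) ≤ if v ∈ w :: ws then 1 else 0 := by
      intro rest hr
      by_cases h1 : v = w
      · subst h1
        by_cases h2 : v ∈ ws <;> simp [h2, List.mem_cons] at hr ⊢ <;> omega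
      · by_cases h2 : v ∈ ws <;> simp [h1, h2, List.mem_cons] at hr ⊢ <;> try omega
    cases ws with
    | nil =>
      simp only [orChain, W]
      by_cases h1 : v = w <;> simp [h1]
    | cons x xs =>
      rw [show orChain (w :: x :: xs) = .or (.var w) (orChain (x :: xs)) from rfl]
      show max (if v = w then 1 else 0) (W (orChain (x :: xs)) v) ≤ _
      exact hstep (orChain (x :: xs)) ih

theorem W_andChain [DecidableEq V] (l : List (MF V)) (v : V) :
    W (andChain l) v = (l.map (fun f => W f v)).sum := by
  induction l with
  | nil => simp [andChain, W]
  | cons f fs ih =>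
    cases fs with
    | nil => simp [andChain]
    | cons g gs =>
      rw [show andChain (f :: g :: gs) = .and f (andChain (g :: gs)) from rfl]
      simp only [W, ih, List.map_cons, List.sum_cons]

theorem cntOr_orChain (l : List V) : cntOr (orChain l) = l.length - 1 := by
  induction l with
  | nil => simp [orChain, cntOr]
  | cons w ws ih =>
    cases ws with
    | nil => simp [orChain, cntOr]
    | cons x xs =>
      rw [show orChain (w :: x :: xs) = .or (.var w) (orChain (x :: xs)) from rfl]
      simp only [cntOr, ih]
      simp
      try omega

theorem cntAnd_orChain (l : List V) : cntAnd (orChain l) = 0 := by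
  induction l with
  | nil => simp [orChain, cntAnd]
  | cons w ws ih =>
    cases ws with
    | nil => simp [orChain, cntAnd]
    | cons x xs =>
      rw [show orChain (w :: x :: xs) = .or (.var w) (orChain (x :: xs)) from rfl]
      show cntAnd (.var w) + cntAnd (orChain (x :: xs)) = 0
      simp [cntAnd, ih]

theorem cntOr_andChain (l : List (MF V)) :
    cntOr (andChain l) = (l.map cntOr).sum := by
  induction l with
  | nil => simp [andChain, cntOr]
  | cons f fs ih =>
    cases fs with
    | nil => simp [andChain]
    | cons g gs =>
      rw [show andChain (f :: g :: gs) = .and f (andChain (g :: gs)) from rfl]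
      simp only [cntOr, ih, List.map_cons, List.sum_cons]

theorem cntAnd_andChain (l : List (MF V)) :
    cntAnd (andChain l) = (l.map cntAnd).sum + (l.length - 1) := by
  induction l with
  | nil => simp [andChain, cntAnd]
  | cons f fs ih =>
    cases fs with
    | nil => simp [andChain]
    | cons g gs =>
      rw [show andChain (f :: g :: gs) = .and f (andChain (g :: gs)) from rfl]
      simp only [cntAnd, ih, List.map_cons, List.sum_cons, List.length_cons]
      omega

theorem ad_orChain (l : List V) : (ad (orChain l)).1 ≤ 1 ∧ (ad (orChain l)).2 = 0 := by
  induction l with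
  | nil => simp [orChain, ad]
  | cons w ws ih =>
    cases ws with
    | nil => simp [orChain, ad]
    | cons x xs =>
      rw [show orChain (w :: x :: xs) = .or (.var w) (orChain (x :: xs)) from rfl]
      refine ⟨?_, rfl⟩
      obtain ⟨i1, i2⟩ := ih
      simp only [ad, max_le_iff]
      omega

theorem ad_andChain (l : List (MF V)) (a b : ℕ)
    (h : ∀ f ∈ l, (ad f).1 ≤ a ∧ (ad f).2 ≤ b) :
    (ad (andChain l)).1 ≤ a ∧ (ad (andChain l)).2 ≤ max b (a + 1) := by
  induction l with
  | nil => simp [andChain, ad]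
  | cons f fs ih =>
    cases fs with
    | nil =>
      simp only [andChain]
      have := h f (by simp)
      exact ⟨this.1, le_trans this.2 (le_max_left _ _)⟩
    | cons g gs =>
      rw [show andChain (f :: g :: gs) = .and f (andChain (g :: gs)) from rfl]
      have hf := h f (by simp)
      have ihr := ih (fun f' hf' => h f' (by simp [hf']))
      simp only [ad]
      refine ⟨by simp, ?_⟩
      simp only [max_le_iff]
      omega


end MF

section Geo

variable {m n' : ℕ}

/-- embed a reduced cell as a special cell (coordinate sum zero) -/
def ec (c : Fin (m + 1) → Fin (n' + 1)) : Cell (m + 2) (n' + 1) :=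
  Fin.cons (-∑ i, c i) c

def IsSp (v : Cell (m + 2) (n' + 1)) : Prop := ∑ j, v j = 0

theorem isSp_ec (c : Fin (m + 1) → Fin (n' + 1)) : IsSp (ec c) := by
  unfold IsSp ec
  rw [Fin.sum_univ_succ]
  simp

theorem ec_inj : Function.Injective (ec (m := m) (n' := n')) := by
  intro c c' h
  funext i
  have := congrFun h i.succ
  simpa [ec] using this

theorem ec_surj (v : Cell (m + 2) (n' + 1)) (h : IsSp v) :
    ec (fun i => v i.succ) = v := by
  unfold IsSp at h
  rw [Fin.sum_univ_succ] at h
  funext j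
  cases j using Fin.cases with
  | zero =>
    simp only [ec, Fin.cons_zero]
    exact (eq_neg_of_add_eq_zero_left h).symm
  | succ i =>
    simp only [ec, Fin.cons_succ]

theorem exists_unique_special (d : Fin (m + 2)) (c : Cell (m + 2) (n' + 1)) :
    ∃! a : Fin (n' + 1), IsSp (Function.update c d a) := by
  have key : ∀ a : Fin (n' + 1),
      IsSp (Function.update c d a) ↔ a = -∑ j ∈ Finset.univ \ {d}, c j := by
    intro a
    unfold IsSp
    rw [Finset.sum_update_of_mem (Finset.mem_univ d)]
    constructor
    · intro h; exact eq_neg_of_add_eq_zero_left h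
    · intro h; rw [h]; simp
  refine ⟨-∑ j ∈ Finset.univ \ {d}, c j, (key _).mpr rfl, fun a ha => (key a).mp ha⟩

theorem special_line_unique {v w : Cell (m + 2) (n' + 1)} {d : Fin (m + 2)}
    (hv : IsSp v) (hw : IsSp w) (h : ∀ j, j ≠ d → v j = w j) : v = w := by
  obtain ⟨a, -, huniq⟩ := exists_unique_special d v
  have h1 : Function.update v d (v d) = v := Function.update_eq_self d v
  have h2 : Function.update v d (w d) = w := by
    funext j
    by_cases hj : j = d
    · subst hj; simp
    · rw [Function.update_of_ne hj]; exact h j hj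
  have hv1 : IsSp (Function.update v d (v d)) := by rw [h1]; exact hv
  have hv2 : IsSp (Function.update v d (w d)) := by rw [h2]; exact hw
  have e1 : v d = a := huniq _ hv1
  have e2 : w d = a := huniq _ hv2
  rw [← h2, e2, ← e1, h1]

/-- punctured line through `v` in direction `d` -/
noncomputable def pl (v : Cell (m + 2) (n' + 1)) (d : Fin (m + 2)) : List (Cell (m + 2) (n' + 1)) :=
  ((Finset.univ.erase (v d)).toList).map (fun a => Function.update v d a)

theorem length_pl (v : Cell (m + 2) (n' + 1)) (d : Fin (m + 2)) :
    (pl v d).length = n' := by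
  unfold pl
  rw [List.length_map, Finset.length_toList, Finset.card_erase_of_mem (Finset.mem_univ _)]
  simp

theorem mem_pl {w v : Cell (m + 2) (n' + 1)} {d : Fin (m + 2)} :
    w ∈ pl v d ↔ ∃ a : Fin (n' + 1), a ≠ v d ∧ w = Function.update v d a := by
  unfold pl
  simp only [List.mem_map, Finset.mem_toList, Finset.mem_erase, Finset.mem_univ, and_true]
  constructor
  · rintro ⟨a, ha, rfl⟩; exact ⟨a, ha, rfl⟩
  · rintro ⟨a, ha, rfl⟩; exact ⟨a, ha, rfl⟩

theorem mem_pl_agree {w v : Cell (m + 2) (n' + 1)} {d : Fin (m + 2)} (h : w ∈ pl v d) :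
    (∀ j, j ≠ d → w j = v j) ∧ w d ≠ v d := by
  obtain ⟨a, ha, rfl⟩ := mem_pl.mp h
  constructor
  · intro j hj; rw [Function.update_of_ne hj]
  · simpa using ha

theorem pl_unique {v : Cell (m + 2) (n' + 1)} {d : Fin (m + 2)}
    {c c' : Fin (m + 1) → Fin (n' + 1)}
    (h : v ∈ pl (ec c) d) (h' : v ∈ pl (ec c') d) : c = c' := by
  obtain ⟨hag, -⟩ := mem_pl_agree h
  obtain ⟨hag', -⟩ := mem_pl_agree h'
  have : ec c = ec c' := special_line_unique (isSp_ec c) (isSp_ec c')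
    (fun j hj => by rw [← hag j hj, ← hag' j hj])
  exact ec_inj this

theorem not_mem_pl_special {v : Cell (m + 2) (n' + 1)} {d : Fin (m + 2)}
    {c : Fin (m + 1) → Fin (n' + 1)} (hv : IsSp v) : v ∉ pl (ec c) d := by
  intro h
  obtain ⟨hag, hne⟩ := mem_pl_agree h
  exact hne (congrFun (special_line_unique hv (isSp_ec c) hag) d)

end Geo


section Formula

open MF

theorem list_sum_const {α : Type} (l : List α) (f : α → ℕ) (c : ℕ)
    (h : ∀ x ∈ l, f x = c) : (l.map f).sum = l.length * c := by
  induction l with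
  | nil => simp
  | cons x xs ih =>
    simp only [List.map_cons, List.sum_cons, List.length_cons, h x (by simp)]
    rw [ih (fun y hy => h y (by simp [hy]))]
    ring

variable {m n' : ℕ}

noncomputable def conj (v : Cell (m + 2) (n' + 1)) : MF (Cell (m + 2) (n' + 1)) :=
  .or (.var v) (andChain ((List.finRange (m + 2)).map (fun d => orChain (pl v d))))

noncomputable def specials (m n' : ℕ) : List (Fin (m + 1) → Fin (n' + 1)) :=
  (Finset.univ : Finset (Fin (m + 1) → Fin (n' + 1))).toList

noncomputable def bigF (m n' : ℕ) : MF (Cell (m + 2) (n' + 1)) :=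
  andChain ((specials m n').map (fun c => conj (ec c)))

theorem length_specials : (specials m n').length = (n' + 1) ^ (m + 1) := by
  rw [specials, Finset.length_toList, Finset.card_univ]
  simp

theorem mem_specials (c : Fin (m + 1) → Fin (n' + 1)) : c ∈ specials m n' :=
  Finset.mem_toList.mpr (Finset.mem_univ c)

theorem feval_conj (v : Cell (m + 2) (n' + 1)) (σ : Cell (m + 2) (n' + 1) → Bool) :
    FEval (conj v) σ ↔ (σ v = true ∨ ∀ d, ∃ w ∈ pl v d, σ w = true) := by
  unfold conj
  rw [feval_or, feval_var, feval_andChain]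
  apply or_congr Iff.rfl
  constructor
  · intro h d
    exact (feval_orChain _ _).mp (h _ (List.mem_map.mpr ⟨d, List.mem_finRange d, rfl⟩))
  · intro h f hf
    obtain ⟨d, -, rfl⟩ := List.mem_map.mp hf
    exact (feval_orChain _ _).mpr (h d)

theorem feval_bigF (σ : Cell (m + 2) (n' + 1) → Bool) :
    FEval (bigF m n') σ ↔ ∀ c, FEval (conj (ec c)) σ := by
  rw [bigF, feval_andChain]
  constructor
  · intro h c
    exact h _ (List.mem_map.mpr ⟨c, mem_specials c, rfl⟩)
  · intro h f hf
    obtain ⟨c, -, rfl⟩ := List.mem_map.mp hf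
    exact h c

theorem cntOr_conj (v : Cell (m + 2) (n' + 1)) :
    cntOr (conj v) = (m + 2) * (n' - 1) + 1 := by
  unfold conj
  simp only [cntOr, cntOr_andChain, List.map_map]
  rw [list_sum_const _ _ (n' - 1) (fun d _ => by
    simp only [Function.comp_apply, cntOr_orChain, length_pl])]
  simp

theorem cntAnd_conj (v : Cell (m + 2) (n' + 1)) :
    cntAnd (conj v) = m + 1 := by
  unfold conj
  simp only [cntAnd, cntAnd_andChain, List.map_map]
  rw [list_sum_const _ _ 0 (fun d _ => by
    simp only [Function.comp_apply, cntAnd_orChain])]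
  simp

theorem cntOr_bigF :
    cntOr (bigF m n') = (m + 2) * (n' + 1) ^ (m + 1) * (n' - 1) + (n' + 1) ^ (m + 1) := by
  rw [bigF, cntOr_andChain, List.map_map,
    list_sum_const _ _ ((m + 2) * (n' - 1) + 1) (fun c _ => by
      simp only [Function.comp_apply, cntOr_conj]), length_specials]
  ring

theorem cntAnd_bigF :
    cntAnd (bigF m n') = (m + 2) * (n' + 1) ^ (m + 1) - 1 := by
  rw [bigF, cntAnd_andChain, List.map_map,
    list_sum_const _ _ (m + 1) (fun c _ => by
      simp only [Function.comp_apply, cntAnd_conj]), List.length_map, length_specials]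
  have h1 : 1 ≤ (n' + 1) ^ (m + 1) := Nat.one_le_pow _ _ (by omega)
  set L := (n' + 1) ^ (m + 1)
  have : L * (m + 1) + L = L * (m + 2) := by ring
  have h3 : L * (m + 2) = (m + 2) * L := by ring
  omega

theorem ad_conj (v : Cell (m + 2) (n' + 1)) :
    (ad (conj v)).1 ≤ 3 ∧ (ad (conj v)).2 = 0 := by
  unfold conj
  refine ⟨?_, rfl⟩
  have hin := ad_andChain ((List.finRange (m + 2)).map (fun d => orChain (pl v d))) 1 0
    (fun f hf => by
      obtain ⟨d, -, rfl⟩ := List.mem_map.mp hf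
      have := ad_orChain (pl v d)
      omega)
  simp only [ad, max_le_iff]
  omega

theorem ad_bigF : (ad (bigF m n')).1 ≤ 3 ∧ (ad (bigF m n')).2 ≤ 4 := by
  rw [bigF]
  have := ad_andChain ((specials m n').map (fun c => conj (ec c))) 3 0
    (fun f hf => by
      obtain ⟨c, -, rfl⟩ := List.mem_map.mp hf
      have := ad_conj (ec c)
      omega)
  omega

theorem W_conj_le (u v : Cell (m + 2) (n' + 1)) :
    W (conj u) v ≤ (if v = u then 1 else 0)
      + ∑ d : Fin (m + 2), (if v ∈ pl u d then 1 else 0) := by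
  unfold conj
  have hin : W (andChain ((List.finRange (m + 2)).map (fun d => orChain (pl u d)))) v
      ≤ ∑ d : Fin (m + 2), (if v ∈ pl u d then 1 else 0) := by
    rw [W_andChain, List.map_map]
    have hle : ((List.finRange (m + 2)).map
          ((fun f => W f v) ∘ fun d => orChain (pl u d))).sum
        ≤ ((List.finRange (m + 2)).map (fun d => if v ∈ pl u d then 1 else 0)).sum := by
      apply List.sum_le_sum
      intro d _
      simp only [Function.comp_apply]
      exact W_orChain_le (pl u d) v
    refine le_trans hle ?_
    rw [Fin.sum_univ_def]
  show max (if v = u then 1 else 0) _ ≤ _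
  simp only [max_le_iff]
  constructor
  · split <;> omega
  · omega

theorem W_bigF_le (v : Cell (m + 2) (n' + 1)) :
    W (bigF m n') v ≤ (∑ c : Fin (m + 1) → Fin (n' + 1), if v = ec c then 1 else 0)
      + ∑ c : Fin (m + 1) → Fin (n' + 1), ∑ d : Fin (m + 2),
          (if v ∈ pl (ec c) d then 1 else 0) := by
  rw [bigF, W_andChain, List.map_map, ← Finset.sum_add_distrib]
  have : ((specials m n').map
        ((fun f => W f v) ∘ fun c => conj (ec c))).sum
      ≤ ((specials m n').map (fun c => (if v = ec c then 1 else 0)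
          + ∑ d : Fin (m + 2), (if v ∈ pl (ec c) d then 1 else 0))).sum := by
    apply List.sum_le_sum
    intro c _
    exact W_conj_le (ec c) v
  refine le_trans this ?_
  rw [specials, Finset.sum_map_toList]

theorem sum_ind_le_one {α β : Type} [Fintype α] [DecidableEq β] (f : α → β) (v : β)
    (hf : Function.Injective f) [DecidablePred fun c => v = f c] :
    (∑ c : α, if v = f c then 1 else 0) ≤ 1 := by
  rw [Finset.sum_boole]
  norm_cast
  apply Finset.card_le_one.mpr
  intro a ha b hb
  simp only [Finset.mem_filter] at ha hb
  exact hf (ha.2.symm.trans hb.2)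

theorem W_bigF_sp {v : Cell (m + 2) (n' + 1)} (hv : IsSp v) : W (bigF m n') v ≤ 1 := by
  refine le_trans (W_bigF_le v) ?_
  have h2 : (∑ c : Fin (m + 1) → Fin (n' + 1), ∑ d : Fin (m + 2),
      (if v ∈ pl (ec c) d then 1 else 0)) = 0 := by
    apply Finset.sum_eq_zero
    intro c _
    apply Finset.sum_eq_zero
    intro d _
    simp [not_mem_pl_special hv]
  rw [h2]
  have := sum_ind_le_one (ec (m := m) (n' := n')) v ec_inj
  omega

theorem W_bigF_all (v : Cell (m + 2) (n' + 1)) : W (bigF m n') v ≤ m + 2 := by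
  by_cases hv : IsSp v
  · have := W_bigF_sp hv; omega
  · refine le_trans (W_bigF_le v) ?_
    have h1 : (∑ c : Fin (m + 1) → Fin (n' + 1), if v = ec c then 1 else 0) = 0 := by
      apply Finset.sum_eq_zero
      intro c _
      have : v ≠ ec c := fun h => hv (h ▸ isSp_ec c)
      simp [this]
    rw [h1, Finset.sum_comm]
    have h2 : ∀ d : Fin (m + 2), (∑ c : Fin (m + 1) → Fin (n' + 1),
        if v ∈ pl (ec c) d then 1 else 0) ≤ 1 := by
      intro d
      rw [Finset.sum_boole]
      norm_cast
      apply Finset.card_le_one.mpr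
      intro a ha b hb
      simp only [Finset.mem_filter] at ha hb
      exact pl_unique ha.2 hb.2
    calc 0 + ∑ d : Fin (m + 2), (∑ c : Fin (m + 1) → Fin (n' + 1),
          if v ∈ pl (ec c) d then 1 else 0)
        ≤ ∑ _d : Fin (m + 2), 1 := by
          rw [Nat.zero_add]
          exact Finset.sum_le_sum (fun d _ => h2 d)
      _ = m + 2 := by simp

theorem feval_bigF_iff (σ : Cell (m + 2) (n' + 1) → Bool) :
    FEval (bigF m n') σ ↔ IsolFun (m + 2) (n' + 1) σ := by
  rw [feval_bigF]
  constructor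
  · intro h d c
    obtain ⟨a, ha, -⟩ := exists_unique_special d c
    set v := Function.update c d a with hvdef
    have hvs : IsSp v := ha
    have hec : ec (fun i => v i.succ) = v := ec_surj v hvs
    have := (feval_conj _ σ).mp (h (fun i => v i.succ))
    rw [hec] at this
    rcases this with hσ | hall
    · exact ⟨v, fun j hj => by rw [hvdef, Function.update_of_ne hj], hσ⟩
    · obtain ⟨w, hw, hσ⟩ := hall d
      have := (mem_pl_agree hw).1
      refine ⟨w, fun j hj => ?_, hσ⟩
      rw [this j hj, hvdef, Function.update_of_ne hj]
  · intro hiso c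
    rw [feval_conj]
    by_cases hσ : σ (ec c) = true
    · exact Or.inl hσ
    · refine Or.inr (fun d => ?_)
      obtain ⟨x, hag, hx⟩ := hiso d (ec c)
      have hne : x ≠ ec c := fun h => hσ (h ▸ hx)
      have hxd : x d ≠ ec c d := by
        intro h
        apply hne
        funext j
        by_cases hj : j = d
        · subst hj; exact h
        · exact hag j hj
      refine ⟨x, mem_pl.mpr ⟨x d, hxd, ?_⟩, hx⟩
      funext j
      by_cases hj : j = d
      · subst hj; simp
      · rw [Function.update_of_ne hj]
        exact hag j hj

end Formula

namespace MF

theorem count_le_of_W {V : Type} [DecidableEq V] (f : MF V) (v : V) (q : ℕ)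
    (hq : W f v ≤ q) :
    ∀ (g : Fin (compile f).n) (t : List (V ⊕ Bool)), (compile f).MemTerms g t →
      t.count (Sum.inl v) ≤ q := by
  intro g t hmem
  obtain ⟨o', f', hm', he', hw'⟩ := allGates f 0 (matches_compile f) g.1
    (by have := g.2; simp only [compile] at this; exact lt_of_lt_of_eq this (lenGates 0 f))
  have hb' : o' + f'.sz - 1 < (compile f).n := by
    have := g.2
    omega
  have hg : g = (⟨o' + f'.sz - 1, hb'⟩ : Fin (compile f).n) := Fin.ext (by simp; omega)
  rw [hg] at hmem
  have := (memTerms_iff f' o' hm' hb' t).mp hmem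
  exact le_trans (count_le_W this v) (le_trans (hw' v) hq)

end MF

theorem exists_cons₂ {α : Type} (l : List α) (h : 2 ≤ l.length) :
    ∃ x y t, l = x :: y :: t := by
  match l with
  | x :: y :: t => exact ⟨x, y, t, rfl⟩

section OneCase

open MF

noncomputable def oneF (m : ℕ) : MF (Cell (m + 2) 1) :=
  andChain ((.or (.var (fun _ => 0)) (.const false)) :: List.replicate (m + 1) (.const true))

variable {m : ℕ}

theorem feval_oneF (σ : Cell (m + 2) 1 → Bool) :
    FEval (oneF m) σ ↔ σ (fun _ => 0) = true := by
  rw [oneF, feval_andChain]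
  constructor
  · intro h
    have := h (.or (.var (fun _ => 0)) (.const false)) List.mem_cons_self
    rw [feval_or, feval_var, feval_const] at this
    rcases this with h1 | h1
    · exact h1
    · cases h1
  · intro h f hf
    rcases List.mem_cons.mp hf with rfl | hf
    · rw [feval_or, feval_var]
      exact Or.inl h
    · rw [List.eq_of_mem_replicate hf, feval_const]

theorem isol_one (σ : Cell (m + 2) 1 → Bool) :
    IsolFun (m + 2) 1 σ ↔ σ (fun _ => 0) = true := by
  constructor
  · intro h
    obtain ⟨x, -, hx⟩ := h 0 (fun _ => 0)
    have : x = fun _ => 0 := funext fun j => Subsingleton.elim _ _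
    rwa [this] at hx
  · intro h d c
    exact ⟨fun _ => 0, fun j _ => Subsingleton.elim _ _, h⟩

theorem cntOr_oneF : cntOr (oneF m) = 1 := by
  rw [oneF, cntOr_andChain]
  simp only [List.map_cons, List.sum_cons]
  rw [list_sum_const _ _ 0 (fun f hf => by rw [List.eq_of_mem_replicate hf]; rfl)]
  simp [cntOr]

theorem cntAnd_oneF : cntAnd (oneF m) = m + 1 := by
  rw [oneF, cntAnd_andChain]
  simp only [List.map_cons, List.sum_cons, List.length_cons, List.length_replicate]
  rw [list_sum_const _ _ 0 (fun f hf => by rw [List.eq_of_mem_replicate hf]; rfl)]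
  simp [cntAnd]

theorem ad_oneF : (ad (oneF m)).1 ≤ 3 ∧ (ad (oneF m)).2 ≤ 4 := by
  rw [oneF]
  have := ad_andChain (((.or (.var (fun _ => 0)) (.const false)) : MF (Cell (m + 2) 1))
      :: List.replicate (m + 1) (.const true)) 1 0 (fun f hf => by
    rcases List.mem_cons.mp hf with rfl | hf
    · simp [ad]
    · rw [List.eq_of_mem_replicate hf]
      simp [ad])
  omega

theorem W_oneF (v : Cell (m + 2) 1) : W (oneF m) v ≤ 1 := by
  rw [oneF, W_andChain]
  simp only [List.map_cons, List.sum_cons]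
  rw [list_sum_const _ _ 0 (fun f hf => by rw [List.eq_of_mem_replicate hf]; rfl)]
  simp only [W, Nat.mul_zero, Nat.add_zero]
  split <;> simp

end OneCase

/-- For all integers `k ≥ 2` and `n ≥ 1`, the function `Isol_{k,n}` admits a
`Π₄` monotone strictly `k`-multilinear Boolean circuit with
`k·n^{k−1}·(n−2) + n^{k−1}` OR gates and `k·n^{k−1} − 1` AND gates, in which
at least a `1/n` fraction of the `n^k` input variables occur at most once in
any term produced by the circuit. -/
theorem isol_pi4_circuit (k n : ℕ) (hk : 2 ≤ k) (hn : 1 ≤ n) :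
    ∃ (C : Circuit (Cell k n)) (o : Fin C.n),
      (∀ σ : Cell k n → Bool, C.gateFun o σ ↔ IsolFun k n σ) ∧
      C.IsPi (fun _ : Unit => o) 4 ∧
      C.StrictlyQMultilinear k ∧
      C.orGateCount = k * n ^ (k - 1) * (n - 2) + n ^ (k - 1) ∧
      C.andGateCount = k * n ^ (k - 1) - 1 ∧
      ∃ Y : Finset (Cell k n), n ^ k ≤ Y.card * n ∧
        ∀ v ∈ Y, ∀ (g : Fin C.n) (t : List (Cell k n ⊕ Bool)),
          C.MemTerms g t → t.count (Sum.inl v) ≤ 1 := by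
  obtain ⟨m, rfl⟩ : ∃ m, k = m + 2 := ⟨k - 2, by omega⟩
  obtain ⟨n', rfl⟩ : ∃ n', n = n' + 1 := ⟨n - 1, by omega⟩
  clear hk hn
  rcases Nat.eq_zero_or_pos n' with rfl | hn1
  · -- n = 1
    refine ⟨MF.compile (oneF m), MF.outIdx _, ?_, ⟨?_, ?_⟩, ?_, ?_, ?_, ?_⟩
    · intro σ
      rw [MF.gateFun_out, feval_oneF, isol_one]
    · intro _
      obtain ⟨f1, g1, hfg⟩ : ∃ f1 g1, oneF m = MF.and f1 g1 := by
        rw [oneF, List.replicate_succ]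
        exact ⟨_, _, rfl⟩
      rw [hfg]
      exact MF.label_out_and f1 g1
    · intro _ l c hd
      exact MF.altDepthLE_out _ 4 (le_trans ad_oneF.1 (by omega)) ad_oneF.2 l c hd
    · exact MF.strict_compile _ _ (fun v => le_trans (W_oneF v) (by omega))
    · rw [MF.orGateCount_compile, cntOr_oneF]
      simp
    · rw [MF.andGateCount_compile, cntAnd_oneF]
      simp
    · refine ⟨{fun _ => 0}, by simp, ?_⟩
      intro v hv g t hmem
      have hv' : v = fun _ => 0 := by simpa using hv
      subst hv'
      exact MF.count_le_of_W (oneF m) _ 1 (W_oneF _) g t hmem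
  · -- n ≥ 2
    obtain ⟨n'', rfl⟩ : ∃ n'', n' = n'' + 1 := ⟨n' - 1, by omega⟩
    refine ⟨MF.compile (bigF m (n'' + 1)), MF.outIdx _, ?_, ⟨?_, ?_⟩, ?_, ?_, ?_, ?_⟩
    · intro σ
      rw [MF.gateFun_out, feval_bigF_iff]
    · intro _
      obtain ⟨x, y, t, hxt⟩ := exists_cons₂
        ((specials m (n'' + 1)).map (fun c => conj (ec c))) (by
          rw [List.length_map, length_specials]
          calc 2 ≤ n'' + 2 := by omega
            _ = (n'' + 2) ^ 1 := (pow_one _).symm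
            _ ≤ (n'' + 2) ^ (m + 1) := Nat.pow_le_pow_right (by omega) (by omega))
      obtain ⟨f1, g1, hfg⟩ : ∃ f1 g1, bigF m (n'' + 1) = MF.and f1 g1 := by
        rw [bigF, hxt]
        exact ⟨_, _, rfl⟩
      rw [hfg]
      exact MF.label_out_and f1 g1
    · intro _ l c hd
      exact MF.altDepthLE_out _ 4 (le_trans ad_bigF.1 (by omega)) ad_bigF.2 l c hd
    · exact MF.strict_compile _ _ W_bigF_all
    · rw [MF.orGateCount_compile, cntOr_bigF]
      have e1 : m + 2 - 1 = m + 1 := by omega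
      have e2 : n'' + 1 + 1 - 2 = n'' + 1 - 1 := by omega
      rw [e1, e2]
    · rw [MF.andGateCount_compile, cntAnd_bigF]
      have e1 : m + 2 - 1 = m + 1 := by omega
      rw [e1]
    · refine ⟨Finset.image (fun c => ec c) Finset.univ, ?_, ?_⟩
      · rw [Finset.card_image_of_injective _ ec_inj, Finset.card_univ]
        have : Fintype.card (Fin (m + 1) → Fin (n'' + 1 + 1)) = (n'' + 1 + 1) ^ (m + 1) := by
          simp
        rw [this, ← pow_succ]
      · intro v hv g t hmem
        obtain ⟨c, -, rfl⟩ := Finset.mem_image.mp hv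
        exact MF.count_le_of_W _ _ 1 (W_bigF_sp (isSp_ec c)) g t hmem

end MC
end

section
/- Let C be a monotone Boolean circuit computing Isol_{k,n}, and let g be a gate of C computing a disjunction of variables. If the entries of the input matrix represented by the variables in this disjunction do not all belong to a common line, then the circuit obtained from C by replacing the gate g with the Boolean constant 1 still computes Isol_{k,n}. -/
open BigOperators

namespace MC

lemma termEval_mono {V : Type} {σ τ : V → Bool} (h : ∀ v, σ v = true → τ v = true)
    {t : List (V ⊕ Bool)} (ht : termEval σ t = true) : termEval τ t = true := by
  simp only [termEval, List.all_eq_true] at ht ⊢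
  intro x hx
  cases x with
  | inl v => exact h v (ht _ hx)
  | inr b => exact ht _ hx

lemma replace_label_ne {V : Type} (C : Circuit V) (g i : Fin C.n) (h : i ≠ g) :
    (C.replaceByTrue g).label i = C.label i := Function.update_of_ne h _ _

lemma replace_label_self {V : Type} (C : Circuit V) (g : Fin C.n) :
    (C.replaceByTrue g).label g = .const true := Function.update_self _ _ _

lemma memTerms_replace_forward {V : Type} (C : Circuit V) (g : Fin C.n) (σ : V → Bool)
    {i : Fin C.n} {t : List (V ⊕ Bool)} (ht : C.MemTerms i t) :
    ∃ t', (C.replaceByTrue g).MemTerms i t' ∧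
      (termEval σ t = true → termEval σ t' = true) := by
  induction ht with
  | @var i v h =>
    by_cases hig : i = g
    · exact ⟨[Sum.inr true], .const (hig ▸ replace_label_self C g), fun _ => rfl⟩
    · exact ⟨[Sum.inl v], .var ((replace_label_ne C g i hig).trans h), fun hh => hh⟩
  | @const i b h =>
    by_cases hig : i = g
    · exact ⟨[Sum.inr true], .const (hig ▸ replace_label_self C g), fun _ => rfl⟩
    · exact ⟨[Sum.inr b], .const ((replace_label_ne C g i hig).trans h), fun hh => hh⟩
  | @or_left i a b t h ha _ ih =>
    by_cases hig : i = g
    · exact ⟨[Sum.inr true], .const (hig ▸ replace_label_self C g), fun _ => rfl⟩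
    · obtain ⟨t', ht', himp⟩ := ih
      exact ⟨t', .or_left ((replace_label_ne C g i hig).trans h) ha ht', himp⟩
  | @or_right i a b t h hb _ ih =>
    by_cases hig : i = g
    · exact ⟨[Sum.inr true], .const (hig ▸ replace_label_self C g), fun _ => rfl⟩
    · obtain ⟨t', ht', himp⟩ := ih
      exact ⟨t', .or_right ((replace_label_ne C g i hig).trans h) hb ht', himp⟩
  | @and i a b t₁ t₂ h ha hb _ _ ih₁ ih₂ =>
    by_cases hig : i = g
    · exact ⟨[Sum.inr true], .const (hig ▸ replace_label_self C g), fun _ => rfl⟩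
    · obtain ⟨t₁', ht₁', himp₁⟩ := ih₁
      obtain ⟨t₂', ht₂', himp₂⟩ := ih₂
      refine ⟨t₁' ++ t₂', .and ((replace_label_ne C g i hig).trans h) ha hb ht₁' ht₂', ?_⟩
      intro hh
      simp only [termEval, List.all_append, Bool.and_eq_true] at hh ⊢
      exact ⟨himp₁ hh.1, himp₂ hh.2⟩

lemma memTerms_replace_backward {V : Type} (C : Circuit V) (g : Fin C.n) (σ : V → Bool)
    {s : List (V ⊕ Bool)} (hs : C.MemTerms g s) (hsev : termEval σ s = true)
    {i : Fin (C.replaceByTrue g).n} {t' : List (V ⊕ Bool)}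
    (ht' : (C.replaceByTrue g).MemTerms i t') :
    ∃ t, C.MemTerms ⟨i.1, i.2⟩ t ∧ (termEval σ t' = true → termEval σ t = true) := by
  induction ht' with
  | @var i v h =>
    by_cases hig : i = g
    · exact ⟨s, hig.symm ▸ hs, fun _ => hsev⟩
    · exact ⟨[Sum.inl v], .var ((replace_label_ne C g i hig).symm.trans h), fun hh => hh⟩
  | @const i b h =>
    by_cases hig : i = g
    · exact ⟨s, hig.symm ▸ hs, fun _ => hsev⟩
    · exact ⟨[Sum.inr b], .const ((replace_label_ne C g i hig).symm.trans h), fun hh => hh⟩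
  | @or_left i a b t h ha _ ih =>
    by_cases hig : i = g
    · exact ⟨s, hig.symm ▸ hs, fun _ => hsev⟩
    · obtain ⟨t0, ht0, himp⟩ := ih
      exact ⟨t0, .or_left ((replace_label_ne C g i hig).symm.trans h) ha ht0, himp⟩
  | @or_right i a b t h hb _ ih =>
    by_cases hig : i = g
    · exact ⟨s, hig.symm ▸ hs, fun _ => hsev⟩
    · obtain ⟨t0, ht0, himp⟩ := ih
      exact ⟨t0, .or_right ((replace_label_ne C g i hig).symm.trans h) hb ht0, himp⟩
  | @and i a b t₁ t₂ h ha hb _ _ ih₁ ih₂ =>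
    by_cases hig : i = g
    · exact ⟨s, hig.symm ▸ hs, fun _ => hsev⟩
    · obtain ⟨t₁0, ht₁0, himp₁⟩ := ih₁
      obtain ⟨t₂0, ht₂0, himp₂⟩ := ih₂
      refine ⟨t₁0 ++ t₂0, .and ((replace_label_ne C g i hig).symm.trans h) ha hb ht₁0 ht₂0, ?_⟩
      intro hh
      simp only [termEval, List.all_append, Bool.and_eq_true] at hh ⊢
      exact ⟨himp₁ hh.1, himp₂ hh.2⟩

/-- Let `C` be a monotone Boolean circuit computing `Isol_{k,n}` (at its
output gate `o`), and let `g` be a gate of `C` computing a disjunction of the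
variables in `W`. If the entries represented by the variables in `W` do not
all belong to a common line of the input matrix, then the circuit obtained
from `C` by replacing the gate `g` with the Boolean constant `1` still
computes `Isol_{k,n}`. -/
theorem replace_gate_by_true (k n : ℕ) (C : Circuit (Cell k n)) (o : Fin C.n)
    (hcomp : ∀ σ : Cell k n → Bool, C.gateFun o σ ↔ IsolFun k n σ)
    (g : Fin C.n) (W : Finset (Cell k n))
    (hg : ∀ σ : Cell k n → Bool, C.gateFun g σ ↔ ∃ v ∈ W, σ v = true)
    (hW : ¬ ∃ (d : Fin k) (c : Cell k n), ∀ x ∈ W, ∀ j : Fin k, j ≠ d → x j = c j) :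
    ∀ σ : Cell k n → Bool,
      (C.replaceByTrue g).gateFun ⟨o.1, o.2⟩ σ ↔ IsolFun k n σ := by
  classical
  intro σ
  constructor
  · intro h
    by_contra hn
    unfold IsolFun at hn
    push_neg at hn
    obtain ⟨d, c, hline⟩ := hn
    -- the blocking assignment: true off the line (d, c), σ on it
    set τ : Cell k n → Bool :=
      fun x => if ∀ j : Fin k, j ≠ d → x j = c j then σ x else true with hτ
    have hστ : ∀ v, σ v = true → τ v = true := by
      intro v hv
      show (if ∀ j : Fin k, j ≠ d → v j = c j then σ v else true) = true
      by_cases hvl : ∀ j : Fin k, j ≠ d → v j = c j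
      · rw [if_pos hvl]; exact hv
      · rw [if_neg hvl]
    -- some variable of W is off the line, so gate g is true under τ
    push_neg at hW
    obtain ⟨w, hwW, j, hjd, hwj⟩ := hW d c
    have hτw : τ w = true := by
      have hnl : ¬ ∀ j : Fin k, j ≠ d → w j = c j := fun hh => hwj (hh j hjd)
      show (if ∀ j : Fin k, j ≠ d → w j = c j then σ w else true) = true
      rw [if_neg hnl]
    obtain ⟨s, hs, hsev⟩ := (hg τ).mpr ⟨w, hwW, hτw⟩
    -- lift the true term of the modified circuit back to C
    obtain ⟨t', ht', htev⟩ := h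
    obtain ⟨t, ht, himp⟩ := memTerms_replace_backward C g τ hs hsev ht'
    have hCτ : C.gateFun o τ := ⟨t, ht, himp (termEval_mono hστ htev)⟩
    have hiso : IsolFun k n τ := (hcomp τ).mp hCτ
    obtain ⟨x, hxl, hxt⟩ := hiso d c
    have hxs : τ x = σ x := by
      show (if ∀ j : Fin k, j ≠ d → x j = c j then σ x else true) = σ x
      rw [if_pos hxl]
    exact hline x hxl (hxs ▸ hxt)
  · intro h
    obtain ⟨t, ht, htev⟩ := (hcomp σ).mpr h
    obtain ⟨t', ht', himp⟩ := memTerms_replace_forward C g σ ht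
    exact ⟨t', ht', himp htev⟩

end MC
end
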